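/- arXiv:2203.12549 — 4 statements merged into one kernel-verified Lean document; each statement's English description precedes it below -/
import Mathlib

section
/- Let G be a graph, D a double circuit of B(G), and let S be a subdivision class of G[D] (the edge set of a path in G[D] all of whose internal vertices have degree 2 in G[D], with endpoints of degree ≥ 3). Then S is contained in a single part of the circuit partition of D. -/
open Set

namespace Paper

/-! ### Multigraphs, walks, cycles -/

/-- A multigraph on vertex type `V` with edge type `E`: each edge has an
unordered pair of endpoints (possibly equal, giving a loop). -/
structure Multigraph (V : Type*) (E : Type*) where
  inc : E → Sym2 V

namespace Multigraph

variable {V E : Type*}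

/-- `G.IsWalk I u es vs`: starting at vertex `u` and using only edges in `I`,
the edges `es` form a walk that successively visits the vertices `vs`. -/
inductive IsWalk (G : Multigraph V E) (I : Set E) : V → List E → List V → Prop
  | nil (v : V) : IsWalk G I v [] []
  | cons {u v : V} {e : E} {es : List E} {vs : List V} :
      e ∈ I → G.inc e = s(u, v) → IsWalk G I v es vs → IsWalk G I u (e :: es) (v :: vs)

/-- A walk from `u` to `w` inside the edge set `I`. -/
def IsWalkFrom (G : Multigraph V E) (I : Set E) (u : V) (es : List E) (vs : List V)
    (w : V) : Prop :=
  G.IsWalk I u es vs ∧ (u :: vs).getLast (by simp) = w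

/-- `u` and `w` are joined by a walk using edges of `I` (same component of `G[I]`). -/
def Reachable (G : Multigraph V E) (I : Set E) (u w : V) : Prop :=
  ∃ es vs, G.IsWalkFrom I u es vs w

/-- A cycle based at `v` using edges of `I`: a nonempty closed walk with no repeated
edges and no repeated vertices (except for the base point).  A loop is a cycle of
length `1` and a pair of parallel edges forms a cycle of length `2`. -/
def IsCycle (G : Multigraph V E) (I : Set E) (v : V) (es : List E) (vs : List V) : Prop :=
  G.IsWalkFrom I v es vs v ∧ es ≠ [] ∧ es.Nodup ∧ vs.Nodup

/-- `C` is the edge set of a cycle of the subgraph `G[I]`. -/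
def IsCycleIn (G : Multigraph V E) (I : Set E) (C : Set E) : Prop :=
  ∃ v es vs, G.IsCycle I v es vs ∧ C = {e | e ∈ es}

/-- A path from `u` to `w`: a walk with pairwise distinct vertices. -/
def IsPath (G : Multigraph V E) (I : Set E) (u : V) (es : List E) (vs : List V)
    (w : V) : Prop :=
  G.IsWalkFrom I u es vs w ∧ (u :: vs).Nodup

/-- The vertices covered by an edge set `D`; the vertex set of `G[D]`. -/
def verts (G : Multigraph V E) (D : Set E) : Set V := {v | ∃ e ∈ D, v ∈ G.inc e}

/-- The degree of `v` in the subgraph `G[D]` (loops count twice). -/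
noncomputable def degree (G : Multigraph V E) (D : Set E) (v : V) : ℕ :=
  {e ∈ D | v ∈ G.inc e}.ncard + {e ∈ D | G.inc e = s(v, v)}.ncard

/-- Every connected component of `G[I]` contains at most one cycle:
any two cycles of `G[I]` lying in the same component coincide. -/
def BicircIndep (G : Multigraph V E) (I : Set E) : Prop :=
  ∀ C₁ C₂ : Set E, G.IsCycleIn I C₁ → G.IsCycleIn I C₂ →
    (∃ u w, u ∈ G.verts C₁ ∧ w ∈ G.verts C₂ ∧ G.Reachable I u w) → C₁ = C₂

/-- `M` is the bicircular matroid `B(G)` of the multigraph `G`. -/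
def IsBicircularOf (G : Multigraph V E) (M : Matroid E) : Prop :=
  M.E = univ ∧ ∀ I : Set E, M.Indep I ↔ G.BicircIndep I

end Multigraph

/-! ### Matroid notions -/

variable {α : Type*}

/-- The (extended) rank of a set in a matroid. -/
noncomputable def eRk (M : Matroid α) (X : Set α) : ℕ∞ :=
  ⨆ I ∈ {I | M.Indep I ∧ I ⊆ X}, I.encard

/-- A circuit: a minimal dependent set. -/
def Circuit (M : Matroid α) (C : Set α) : Prop :=
  M.Dep C ∧ ∀ D ⊂ C, ¬ M.Dep D

/-- A double circuit: a finite set `D` with `r(D) = |D| - 2` whose rank does not drop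
when any single element is removed. -/
def DoubleCircuit (M : Matroid α) (D : Set α) : Prop :=
  D ⊆ M.E ∧ D.Finite ∧ eRk M D + 2 = D.encard ∧ ∀ d ∈ D, eRk M (D \ {d}) = eRk M D

/-- `f` is a circuit partition of `D`: a partition of `D` into nonempty parts such that the
circuits of `M` contained in `D` are exactly the complements in `D` of the parts. -/
def CircuitPartition (M : Matroid α) (D : Set α) {k : ℕ} (f : Fin k → Set α) : Prop :=
  (∀ i, (f i).Nonempty) ∧ (∀ i j : Fin k, i ≠ j → Disjoint (f i) (f j)) ∧
    (⋃ i, f i) = D ∧ ∀ C : Set α, (Circuit M C ∧ C ⊆ D) ↔ ∃ i, C = D \ f i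

/-- A part of a partition is singular if it has exactly one element. -/
def PositiveDoubleCircuit (M : Matroid α) (D : Set α) : Prop :=
  DoubleCircuit M D ∧ ∃ (k : ℕ) (f : Fin k → Set α), CircuitPartition M D f ∧
    {i : Fin k | (f i).encard ≠ 1}.ncard < {i : Fin k | (f i).encard = 1}.ncard

/-- A hyperplane (copoint): a maximal proper flat. -/
def Hyperplane (M : Matroid α) (H : Set α) : Prop :=
  M.IsFlat H ∧ H ≠ M.E ∧ ∀ F, M.IsFlat F → H ⊂ F → F = M.E

/-- A coline: a flat of rank `r(M) - 2`. -/
def Coline (M : Matroid α) (L : Set α) : Prop :=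
  M.IsFlat L ∧ eRk M L + 2 = eRk M M.E

/-- A positive coline: more simple copoints on `L` than multiple copoints on `L`. -/
def PositiveColine (M : Matroid α) (L : Set α) : Prop :=
  Coline M L ∧
    {H | Hyperplane M H ∧ L ⊆ H ∧ (H \ L).encard ≠ 1}.ncard <
      {H | Hyperplane M H ∧ L ⊆ H ∧ (H \ L).encard = 1}.ncard

/-- Deletion of a set of elements. -/
def delete (M : Matroid α) (D : Set α) : Matroid α := M.restrict (M.E \ D)

/-- Contraction of a set of elements. -/
def contract (M : Matroid α) (C : Set α) : Matroid α := (delete M✶ C)✶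

/-- `N` is a minor of `M`. -/
def IsMinorOf (N M : Matroid α) : Prop := ∃ C D : Set α, N = delete (contract M C) D

/-- `M` is (isomorphic to) the uniform matroid `U_{r,n}`. -/
def IsUniform (r n : ℕ) {β : Type*} (M : Matroid β) : Prop :=
  M.E.encard = n ∧ ∀ I ⊆ M.E, (M.Indep I ↔ I.encard ≤ (r : ℕ∞))

/-- A simple matroid: every set of at most two elements of the ground set is independent. -/
def IsSimple (M : Matroid α) : Prop := ∀ X ⊆ M.E, X.encard ≤ 2 → M.Indep X

namespace Multigraph

variable {V E : Type*} {G : Multigraph V E}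

lemma IsWalk.edges_subset {I : Set E} {u : V} {es : List E} {vs : List V}
    (h : G.IsWalk I u es vs) : ∀ a ∈ es, a ∈ I := by
  induction h with
  | nil => simp
  | cons he hinc _ ih =>
    intro a ha
    rcases List.mem_cons.1 ha with rfl | ha
    · exact he
    · exact ih a ha

lemma IsWalk.mono_diff {I : Set E} {e : E} {u : V} {es : List E} {vs : List V}
    (h : G.IsWalk I u es vs) (he : ∀ a ∈ es, a ≠ e) : G.IsWalk (I \ {e}) u es vs := by
  induction h with
  | nil => exact .nil _
  | cons hm hinc hw ih =>
    exact .cons ⟨hm, by simpa using he _ (List.mem_cons_self)⟩ hinc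
      (ih fun a ha => he _ (List.mem_cons_of_mem _ ha))

lemma walk_avoids {I : Set E} {e : E} {v : V}
    (hv : ∀ e' ∈ I, v ∈ G.inc e' → e' = e) :
    ∀ (es : List E) (u : V) (vs : List V), G.IsWalk I u es vs → u ≠ v →
      (∀ a ∈ es, a ≠ e) → ∀ x ∈ vs, x ≠ v := by
  intro es
  induction es with
  | nil => intro u vs h _ _ x hx; cases h; simp at hx
  | cons e₀ es' ih =>
    intro u vs h hu hes x hx
    cases h with
    | @cons _ v₁ _ _ vs' hm hinc hw =>
      have hv1 : v₁ ≠ v := by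
        rintro rfl
        exact hes e₀ (List.mem_cons_self) (hv e₀ hm (by rw [hinc]; simp))
      rcases List.mem_cons.1 hx with rfl | hx
      · exact hv1
      · exact ih v₁ vs' hw hv1 (fun a ha => hes a (List.mem_cons_of_mem _ ha)) x hx

lemma walk_endpoint {I : Set E} {e : E} {x v : V}
    (hv : ∀ e' ∈ I, v ∈ G.inc e' → e' = e) (hx : G.inc e = s(x, v)) (hxv : x ≠ v) :
    ∀ (es : List E) (u : V) (vs : List V), G.IsWalk I u es vs → es.Nodup → e ∈ es →
      u = v ∨ (u :: vs).getLast (by simp) = v := by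
  intro es
  induction es with
  | nil => intro u vs _ _ he; simp at he
  | cons e₀ es' ih =>
    intro u vs h hnd he
    cases h with
    | @cons _ v₁ _ _ vs' hm hinc hw =>
      by_cases he₀ : e₀ = e
      · by_cases huv : u = v
        · exact Or.inl huv
        have hv₁ : v = v₁ := by
          have h2 : s(u, v₁) = s(x, v) := by rw [← hinc, he₀, hx]
          rcases Sym2.eq_iff.1 h2 with ⟨_, h2⟩ | ⟨h1, _⟩
          · exact h2.symm
          · exact absurd h1 huv
        subst hv₁
        cases hw with
        | nil => exact Or.inr (by simp)
        | @cons _ v₂ e₁ es'' vs'' hm1 hinc1 hw' =>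
          have h1 : e₁ = e := hv e₁ hm1 (by rw [hinc1]; simp)
          have : e ∈ e₁ :: es'' := h1 ▸ (List.mem_cons_self : e₁ ∈ e₁ :: es'')
          exact absurd (he₀ ▸ this) (List.nodup_cons.1 hnd).1
      · have he' : e ∈ es' := by
          rcases List.mem_cons.1 he with h | h
          · exact absurd h.symm he₀
          · exact h
        have hv1 : v₁ ≠ v := by
          rintro rfl
          exact he₀ (hv e₀ hm (by rw [hinc]; simp))
        rcases ih v₁ vs' hw (List.nodup_cons.1 hnd).2 he' with h | h
        · exact absurd h hv1
        · right
          rw [List.getLast_cons (by simp : (v₁ :: vs') ≠ [])]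
          exact h

lemma cycle_avoids {I : Set E} {e : E} {x v : V}
    (hv : ∀ e' ∈ I, v ∈ G.inc e' → e' = e) (hx : G.inc e = s(x, v)) (hxv : x ≠ v)
    {v₀ : V} {es : List E} {vs : List V} (hc : G.IsCycle I v₀ es vs) : e ∉ es := by
  intro he
  obtain ⟨⟨hw, hlast⟩, hne, hnde, hndv⟩ := hc
  have hv₀ : v₀ = v := by
    rcases walk_endpoint hv hx hxv es v₀ vs hw hnde he with h | h
    · exact h
    · rw [← hlast]; exact h
  cases hw with
  | nil => simp at he
  | @cons _ v₁ e₀ es' vs' hm hinc hw' =>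
    have he₀ : e₀ = e := hv e₀ hm (by rw [hinc, hv₀]; simp)
    have hv₁ : x = v₁ := by
      have h2 : s(v₀, v₁) = s(x, v) := by rw [← hinc, he₀, hx]
      rcases Sym2.eq_iff.1 h2 with ⟨h1, _⟩ | ⟨_, h2⟩
      · exact absurd (hv₀ ▸ h1.symm) hxv
      · exact h2.symm
    subst hv₁
    have hnotin : e₀ ∉ es' := (List.nodup_cons.1 hnde).1
    have hall : ∀ y ∈ vs', y ≠ v :=
      walk_avoids hv es' x vs' hw' hxv
        (fun a ha => by rintro rfl; exact hnotin (he₀ ▸ ha))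
    have hlv : (x :: vs').getLast (by simp) = v := by
      rw [← hv₀, ← hlast, List.getLast_cons (by simp : (x :: vs') ≠ [])]
    rcases List.mem_cons.1 (List.getLast_mem (by simp : (x :: vs') ≠ [])) with h | h
    · exact hxv (h ▸ hlv)
    · exact hall _ h hlv

lemma excise {I : Set E} {e : E} {x v : V}
    (hv : ∀ e' ∈ I, v ∈ G.inc e' → e' = e) (hx : G.inc e = s(x, v)) (hxv : x ≠ v) :
    ∀ (n : ℕ) (es : List E) (u : V) (vs : List V), es.length ≤ n →
      G.IsWalk I u es vs → u ≠ v → (u :: vs).getLast (by simp) ≠ v →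
      ∃ es₂ vs₂, G.IsWalk (I \ {e}) u es₂ vs₂ ∧
        (u :: vs₂).getLast (by simp) = (u :: vs).getLast (by simp) := by
  intro n
  induction n with
  | zero =>
    intro es u vs hlen h _ _
    have : es = [] := List.length_eq_zero_iff.1 (Nat.le_zero.1 hlen)
    subst this
    cases h
    exact ⟨[], [], .nil _, rfl⟩
  | succ n ih =>
    intro es u vs hlen h hu hwv
    cases h with
    | nil => exact ⟨[], [], .nil _, rfl⟩
    | @cons _ v₁ e₀ es' vs' hm hinc hw =>
      by_cases he₀ : e₀ = e
      · have hk : u = x ∧ v = v₁ := by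
          have h2 : s(u, v₁) = s(x, v) := by rw [← hinc, he₀, hx]
          rcases Sym2.eq_iff.1 h2 with ⟨h1, h2⟩ | ⟨h1, _⟩
          · exact ⟨h1, h2.symm⟩
          · exact absurd h1 hu
        obtain ⟨hux, hv₁⟩ := hk
        subst hv₁
        cases hw with
        | nil => exact absurd (by simp) hwv
        | @cons _ v₂ e₁ es'' vs'' hm1 hinc1 hw' =>
          have he₁ : e₁ = e := hv e₁ hm1 (by rw [hinc1]; simp)
          have hv₂ : u = v₂ := by
            have h2 : s(v, v₂) = s(x, v) := by rw [← hinc1, he₁, hx]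
            rcases Sym2.eq_iff.1 h2 with ⟨h1, _⟩ | ⟨_, h2⟩
            · exact absurd h1.symm hxv
            · rw [hux, h2]
          subst hv₂
          have hlast : (u :: v :: u :: vs'').getLast (by simp) =
              (u :: vs'').getLast (by simp) := by
            rw [List.getLast_cons (by simp : (v :: u :: vs'') ≠ []),
              List.getLast_cons (by simp : (u :: vs'') ≠ [])]
          obtain ⟨es₂, vs₂, hw₂, hl₂⟩ := ih es'' u vs''
            (by simp at hlen ⊢; omega) hw' hu (by rw [← hlast]; exact hwv)
          exact ⟨es₂, vs₂, hw₂, by rw [hl₂, hlast]⟩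
      · have hv1 : v₁ ≠ v := by
          rintro rfl
          exact he₀ (hv e₀ hm (by rw [hinc]; simp))
        have hlast : (u :: v₁ :: vs').getLast (by simp) =
            (v₁ :: vs').getLast (by simp) :=
          List.getLast_cons (by simp : (v₁ :: vs') ≠ [])
        obtain ⟨es₂, vs₂, hw₂, hl₂⟩ := ih es' v₁ vs' (by simpa using hlen) hw hv1
          (by rw [← hlast]; exact hwv)
        refine ⟨e₀ :: es₂, v₁ :: vs₂, .cons ⟨hm, by simpa using he₀⟩ hinc hw₂, ?_⟩
        rw [List.getLast_cons (by simp : (v₁ :: vs₂) ≠ []), hlast, hl₂]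

end Multigraph
namespace Multigraph

variable {V E : Type*} {G : Multigraph V E}

lemma circuit_two_incident {M : Matroid E} (hM : G.IsBicircularOf M) {C : Set E}
    (hC : Circuit M C) {e : E} (heC : e ∈ C) {x v : V}
    (hx : G.inc e = s(x, v)) (hxv : x ≠ v) :
    ∃ e' ∈ C, e' ≠ e ∧ v ∈ G.inc e' := by
  by_contra hcon
  push_neg at hcon
  have hv : ∀ e' ∈ C, v ∈ G.inc e' → e' = e := by
    intro e' h1 h2
    by_contra hne
    exact hcon e' h1 hne h2
  have hnind : ¬ M.Indep C := (Matroid.dep_iff.1 hC.1).1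
  have hbi : ¬ G.BicircIndep C := fun h => hnind ((hM.2 C).2 h)
  unfold BicircIndep at hbi
  push_neg at hbi
  obtain ⟨C₁, C₂, hc1, hc2, ⟨a, b, ha, hb, hr⟩, hne⟩ := hbi
  have transfer : ∀ C' : Set E, G.IsCycleIn C C' → G.IsCycleIn (C \ {e}) C' := by
    intro C' hcyc
    obtain ⟨v₀, es, vs, hcy, rfl⟩ := hcyc
    have hee : e ∉ es := cycle_avoids hv hx hxv hcy
    obtain ⟨⟨hw, hlast⟩, h1, h2, h3⟩ := hcy
    exact ⟨v₀, es, vs, ⟨⟨hw.mono_diff (fun a ha => by rintro rfl; exact hee ha), hlast⟩,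
      h1, h2, h3⟩, rfl⟩
  have hsub : ∀ C' : Set E, G.IsCycleIn C C' → ∀ a ∈ G.verts C', a ≠ v := by
    intro C' hcyc a haC
    obtain ⟨v₀, es, vs, hcy, rfl⟩ := hcyc
    obtain ⟨e', he', hae⟩ := haC
    have he'C : e' ∈ C := hcy.1.1.edges_subset e' he'
    have he'e : e' ≠ e := by rintro rfl; exact cycle_avoids hv hx hxv hcy he'
    rintro rfl
    exact he'e (hv e' he'C hae)
  have hav : a ≠ v := hsub C₁ hc1 a ha
  have hbv : b ≠ v := hsub C₂ hc2 b hb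
  obtain ⟨es, vs, hwk, hlast⟩ := hr
  obtain ⟨es₂, vs₂, hw₂, hl₂⟩ := excise hv hx hxv es.length es a vs le_rfl hwk hav
    (by rw [hlast]; exact hbv)
  have hdep2 : M.Dep (C \ {e}) := by
    rw [Matroid.dep_iff]
    refine ⟨fun hind => ?_, by rw [hM.1]; exact Set.subset_univ _⟩
    have hbi2 := (hM.2 (C \ {e})).1 hind
    exact hne (hbi2 C₁ C₂ (transfer C₁ hc1) (transfer C₂ hc2)
      ⟨a, b, ha, hb, es₂, vs₂, hw₂, by rw [hl₂, hlast]⟩)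
  exact hC.2 (C \ {e}) (Set.sdiff_singleton_ssubset.2 heC) hdep2

lemma deg_two_edges {D : Set E} (hfin : D.Finite) {x : V} (hdeg : G.degree D x = 2)
    {a b : E} (ha : a ∈ D) (hb : b ∈ D) (hxa : x ∈ G.inc a) (hxb : x ∈ G.inc b)
    (hab : a ≠ b) : ∀ e ∈ D, x ∈ G.inc e → e = a ∨ e = b := by
  have hfin1 : {e ∈ D | x ∈ G.inc e}.Finite := hfin.subset (Set.sep_subset _ _)
  have hle : {e ∈ D | x ∈ G.inc e}.ncard ≤ 2 := by
    unfold degree at hdeg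
    omega
  have hsub : {a, b} ⊆ {e ∈ D | x ∈ G.inc e} := by
    rintro e (rfl | rfl)
    · exact ⟨ha, hxa⟩
    · exact ⟨hb, hxb⟩
  have heq : {a, b} = {e ∈ D | x ∈ G.inc e} :=
    Set.eq_of_subset_of_ncard_le hsub (hle.trans_eq (Set.ncard_pair hab).symm) hfin1
  intro e he hxe
  have : e ∈ ({a, b} : Set E) := heq ▸ ⟨he, hxe⟩
  simpa using this

lemma chain {M : Matroid E} (hM : G.IsBicircularOf M) {D C : Set E}
    (hfin : D.Finite) (hC : Circuit M C) (hCD : C ⊆ D) :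
    ∀ (es : List E) (u : V) (vs : List V), G.IsWalk D u es vs → (u :: vs).Nodup →
      (∀ x ∈ vs.dropLast, G.degree D x = 2) →
      ∀ a ∈ es, ∀ b ∈ es, a ∈ C → b ∈ C := by
  intro es
  induction es with
  | nil => simp
  | cons e₀ es' ih =>
    intro u vs h hnd hint
    cases h with
    | @cons _ v₁ _ _ vs' hm hinc hw =>
      cases hw with
      | nil =>
        intro a ha b hb hac
        simp only [List.mem_cons, List.not_mem_nil, or_false] at ha hb
        subst ha; subst hb; exact hac
      | @cons _ v₂ e₁ es'' vs'' hm1 hinc1 hw' =>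
        have hu1 : u ≠ v₁ := by simp at hnd; tauto
        have h12 : v₁ ≠ v₂ := by simp at hnd; tauto
        have hu2 : u ≠ v₂ := by simp at hnd; tauto
        have hxa : v₁ ∈ G.inc e₀ := by rw [hinc]; simp
        have hxb : v₁ ∈ G.inc e₁ := by rw [hinc1]; simp
        have hne : e₀ ≠ e₁ := by
          rintro rfl
          rcases Sym2.eq_iff.1 (hinc.symm.trans hinc1) with ⟨h1, _⟩ | ⟨h1, _⟩
          · exact hu1 h1
          · exact hu2 h1
        have hdeg : G.degree D v₁ = 2 := by
          apply hint
          rw [List.dropLast_cons₂]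
          exact List.mem_cons_self
        have key := deg_two_edges hfin hdeg hm hm1 hxa hxb hne
        have fwd : e₀ ∈ C → e₁ ∈ C := by
          intro h0
          obtain ⟨e', he'C, he'ne, he'v⟩ := circuit_two_incident hM hC h0 hinc hu1
          rcases key e' (hCD he'C) he'v with rfl | rfl
          · exact absurd rfl he'ne
          · exact he'C
        have bwd : e₁ ∈ C → e₀ ∈ C := by
          intro h1
          have hinc1' : G.inc e₁ = s(v₂, v₁) := by rw [hinc1, Sym2.eq_swap]
          obtain ⟨e', he'C, he'ne, he'v⟩ :=
            circuit_two_incident hM hC h1 hinc1' (Ne.symm h12)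
          rcases key e' (hCD he'C) he'v with rfl | rfl
          · exact he'C
          · exact absurd rfl he'ne
        have ihr := ih v₁ (v₂ :: vs'') (.cons hm1 hinc1 hw')
          (by simp at hnd ⊢; tauto)
          (by
            intro y hy
            apply hint
            rw [List.dropLast_cons₂]
            exact List.mem_cons_of_mem _ hy)
        have hall : ∀ c, c ∈ e₀ :: e₁ :: es'' → (c ∈ C ↔ e₁ ∈ C) := by
          intro c hc
          rcases List.mem_cons.1 hc with hc0 | hc1
          · subst hc0; exact ⟨fwd, bwd⟩
          · exact ⟨fun h => ihr c hc1 e₁ (List.mem_cons_self) h,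
              fun h => ihr e₁ (List.mem_cons_self) c hc1 h⟩
        intro a ha b hb hac
        exact (hall b hb).2 ((hall a ha).1 hac)

end Multigraph
/-- A subdivision class of `G[D]` (the edge set of a path whose internal
vertices have degree `2` in `G[D]` and whose endpoints have degree `≥ 3`) is contained in a
single part of the circuit partition of the double circuit `D`. -/
theorem subdivisionClass_subset_part {V E : Type*} (G : Multigraph V E) (M : Matroid E)
    (hM : Multigraph.IsBicircularOf G M) (D : Set E) (hD : DoubleCircuit M D)
    {k : ℕ} (f : Fin k → Set E) (hf : CircuitPartition M D f)
    (u w : V) (es : List E) (vs : List V) (hp : G.IsPath D u es vs w)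
    (hint : ∀ x ∈ vs.dropLast, G.degree D x = 2)
    (hu : 3 ≤ G.degree D u) (hw : 3 ≤ G.degree D w) :
    ∃ i, {e | e ∈ es} ⊆ f i := by
  obtain ⟨⟨hwk, hlast⟩, hnd⟩ := hp
  obtain ⟨hpos, hdisj, hunion, hcirc⟩ := hf
  have hfin : D.Finite := hD.2.1
  cases es with
  | nil =>
    have hD0 : D.Nonempty := by
      by_contra h
      rw [Set.not_nonempty_iff_eq_empty] at h
      subst h
      have : G.degree (∅ : Set E) u = 0 := by
        simp [Multigraph.degree]
      omega
    obtain ⟨d, hd⟩ := hD0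
    rw [← hunion] at hd
    obtain ⟨i, _⟩ := Set.mem_iUnion.1 hd
    exact ⟨i, by simp⟩
  | cons e₀ es' =>
    have h0D : e₀ ∈ D := hwk.edges_subset e₀ (List.mem_cons_self)
    obtain ⟨i, hi⟩ := Set.mem_iUnion.1 (show e₀ ∈ ⋃ i, f i from hunion ▸ h0D)
    refine ⟨i, ?_⟩
    intro b hb
    have hbD : b ∈ D := hwk.edges_subset b hb
    obtain ⟨j, hj⟩ := Set.mem_iUnion.1 (show b ∈ ⋃ i, f i from hunion ▸ hbD)
    by_cases hij : j = i
    · exact hij ▸ hj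
    · exfalso
      obtain ⟨hcj, hcjD⟩ := (hcirc (D \ f j)).2 ⟨j, rfl⟩
      have h0 : e₀ ∈ D \ f j :=
        ⟨h0D, fun hmem => Set.disjoint_left.1 (hdisj j i hij) hmem hi⟩
      have hbC : b ∈ D \ f j :=
        Multigraph.chain hM hfin hcj hcjD (e₀ :: es') u vs hwk hnd hint
          e₀ (List.mem_cons_self) b hb h0
      exact hbC.2 hj
end Paper
end

section
/- Let G be a graph and D a double circuit of B(G) of degree k ≤ 4 whose circuit partition has at least k−1 singular parts. Then G contains a cycle of length at most 3. -/
open Set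

namespace Paper

/-! ### Matroid notions -/

variable {α : Type*}

section Aux

variable {V E : Type*}

lemma isWalk_mono (G : Multigraph V E) {I J : Set E} (hIJ : I ⊆ J) {u : V} {es : List E}
    {vs : List V} (h : G.IsWalk I u es vs) : G.IsWalk J u es vs := by
  induction h with
  | nil v => exact Multigraph.IsWalk.nil v
  | cons he hinc _ ih => exact Multigraph.IsWalk.cons (hIJ he) hinc ih

lemma isWalk_edges_subset (G : Multigraph V E) {I : Set E} {u : V} {es : List E}
    {vs : List V} (h : G.IsWalk I u es vs) : ∀ e ∈ es, e ∈ I := by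
  induction h with
  | nil v => simp
  | cons he hinc _ ih =>
    intro e hm
    rcases List.mem_cons.mp hm with rfl | hm
    · exact he
    · exact ih e hm

end Aux

/-- If `D` is a double circuit of `B(G)` of degree `k ≤ 4` whose circuit
partition has at least `k - 1` singular parts, then `G` contains a cycle of length at
most `3`. -/
theorem doubleCircuit_low_degree_short_cycle {V E : Type*} (G : Multigraph V E)
    (M : Matroid E) (hM : Multigraph.IsBicircularOf G M) (D : Set E)
    (hD : DoubleCircuit M D) {k : ℕ} (f : Fin k → Set E) (hf : CircuitPartition M D f)
    (hk : k ≤ 4) (hs : (k : ℕ) - 1 ≤ {i : Fin k | (f i).encard = 1}.ncard) :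
    ∃ C : Set E, G.IsCycleIn univ C ∧ C.encard ≤ 3 := by
  classical
  obtain ⟨hDE, hDfin, hrank, -⟩ := hD
  obtain ⟨hne, hdisj, hunion, hcirc⟩ := hf
  -- k ≠ 0
  rcases Nat.eq_zero_or_pos k with hk0 | hkpos
  · exfalso
    subst hk0
    have hDempty : D = ∅ := by
      rw [← hunion]; simp
    rw [hDempty, Set.encard_empty] at hrank
    simp at hrank
  -- find an index `j` such that all other parts are singular
  obtain ⟨j, hj⟩ : ∃ j : Fin k, ∀ i, i ≠ j → (f i).encard = 1 := by
    by_cases hall : ∀ i, (f i).encard = 1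
    · exact ⟨⟨0, hkpos⟩, fun i _ => hall i⟩
    · push_neg at hall
      obtain ⟨j, hjns⟩ := hall
      refine ⟨j, fun i hij => ?_⟩
      by_contra hins
      have hpair : ({i, j} : Set (Fin k)) ⊆ {i : Fin k | (f i).encard = 1}ᶜ := by
        intro x hx
        rcases hx with rfl | rfl
        · exact hins
        · exact hjns
      have h2 : 2 ≤ ({i : Fin k | (f i).encard = 1}ᶜ).ncard := by
        have := Set.ncard_le_ncard hpair (Set.toFinite _)
        rwa [Set.ncard_pair hij] at this
      have hsum := Set.ncard_add_ncard_compl {i : Fin k | (f i).encard = 1}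
      rw [Nat.card_eq_fintype_card, Fintype.card_fin] at hsum
      have hk2 : 2 ≤ k := by
        haveI : Nontrivial (Fin k) := ⟨⟨i, j, hij⟩⟩
        have := Fintype.one_lt_card (α := Fin k)
        have h' : 1 < k := by simpa using this
        omega
      omega
  -- the complement of `f j` in `D` is a circuit of `M`
  have hC : Circuit M (D \ f j) := ((hcirc (D \ f j)).mpr ⟨j, rfl⟩).1
  -- `D \ f j` has at most `k - 1 ≤ 3` elements
  have hcard : (D \ f j).encard ≤ 3 := by
    have hx : ∀ i : Fin k, ∃ x, i ≠ j → f i = {x} := by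
      intro i
      by_cases hij : i = j
      · exact ⟨(hne i).some, fun h => absurd hij h⟩
      · obtain ⟨x, hx⟩ := Set.encard_eq_one.mp (hj i hij)
        exact ⟨x, fun _ => hx⟩
    choose g hg using hx
    have hsub : D \ f j ⊆ g '' ({j}ᶜ : Set (Fin k)) := by
      intro x hx
      obtain ⟨hxD, hxj⟩ := hx
      rw [← hunion] at hxD
      obtain ⟨i, hi⟩ := Set.mem_iUnion.mp hxD
      have hij : i ≠ j := fun h => hxj (h ▸ hi)
      refine ⟨i, hij, ?_⟩
      have := hg i hij
      rw [this] at hi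
      exact hi.symm
    have h1 : (D \ f j).encard ≤ ({j}ᶜ : Set (Fin k)).encard :=
      le_trans (Set.encard_mono hsub) (Set.encard_image_le _ _)
    have h2 : ({j}ᶜ : Set (Fin k)).encard + 1 = (k : ℕ∞) := by
      have := Set.encard_diff_add_encard_of_subset (Set.subset_univ ({j} : Set (Fin k)))
      rw [Set.encard_singleton, Set.encard_univ, ENat.card_eq_coe_fintype_card,
        Fintype.card_fin] at this
      rw [← this, Set.compl_eq_univ_diff]
    have h3 : ({j}ᶜ : Set (Fin k)).encard + 1 ≤ 4 := by
      rw [h2]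
      exact_mod_cast hk
    have h4 : ({j}ᶜ : Set (Fin k)).encard ≤ 3 := by
      rwa [show (4:ℕ∞) = 3 + 1 from rfl,
        ENat.add_le_add_iff_right (by simp : (1:ℕ∞) ≠ ⊤)] at h3
    exact le_trans h1 h4
  -- a circuit is dependent, hence not bicircular-independent: extract a cycle
  have hnind : ¬ M.Indep (D \ f j) := hC.1.not_indep
  rw [hM.2] at hnind
  unfold Multigraph.BicircIndep at hnind
  push_neg at hnind
  obtain ⟨C₁, C₂, h1, h2, h3, hne12⟩ := hnind
  obtain ⟨v, es, vs, ⟨⟨hwalk, hlast⟩, hesne, hesnd, hvsnd⟩, hCeq⟩ := h1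
  refine ⟨C₁, ⟨v, es, vs, ⟨⟨isWalk_mono G (Set.subset_univ _) hwalk, hlast⟩,
    hesne, hesnd, hvsnd⟩, hCeq⟩, ?_⟩
  have hC1sub : C₁ ⊆ D \ f j := by
    rw [hCeq]
    intro e he
    exact isWalk_edges_subset G hwalk e he
  exact le_trans (Set.encard_mono hC1sub) hcard

end Paper
end

section
/- Let G be a graph and D a double circuit of B(G) whose circuit partition has at least 4 singular parts {e₁}, {e₂}, {e₃}, {e₄}. Then the edges e₁, e₂, e₃, e₄ span a subgraph of G with at most 4 vertices, and hence G contains a cycle of length at most 4. -/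
open Set

namespace Paper

/-! ### Matroid notions -/

variable {α : Type*}

/-! ### Auxiliary walk lemmas -/

section Aux

open Multigraph

variable {V E : Type*} {G : Multigraph V E} {I J : Set E}

/-- The last vertex of a walk starting at `u` with subsequent vertices `vs`. -/
def lastV (u : V) (vs : List V) : V := (u::vs).getLast (by simp)

@[simp] lemma lastV_nil (u : V) : lastV u ([] : List V) = u := rfl

@[simp] lemma lastV_cons (u v : V) (vs : List V) : lastV u (v::vs) = lastV v vs :=
  List.getLast_cons (by simp)

lemma lastV_eq_getLast (u : V) (vs : List V) (h : (u::vs) ≠ []) :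
    (u::vs).getLast h = lastV u vs := rfl

lemma lastV_append (u : V) (vs₁ vs₂ : List V) :
    lastV u (vs₁ ++ vs₂) = lastV (lastV u vs₁) vs₂ := by
  induction vs₁ generalizing u with
  | nil => simp
  | cons v vs ih => simp [ih v]

@[simp] lemma lastV_concat (u x : V) (vs : List V) : lastV u (vs ++ [x]) = x := by
  simp [lastV_append]

lemma lastV_mem (u : V) (vs : List V) : lastV u vs ∈ u::vs := List.getLast_mem _

lemma lastV_mem_of_ne_nil (u : V) {vs : List V} (h : vs ≠ []) : lastV u vs ∈ vs := by
  obtain ⟨v, vs', rfl⟩ := List.exists_cons_of_ne_nil h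
  simpa using lastV_mem v vs'

lemma lastV_self_nil {u : V} {vs : List V} (h : lastV u vs = u) (hnd : (u::vs).Nodup) :
    vs = [] := by
  by_contra hne
  have := lastV_mem_of_ne_nil u hne
  rw [h] at this
  exact (List.nodup_cons.mp hnd).1 this

lemma walk_length {u : V} {es : List E} {vs : List V} (h : G.IsWalk I u es vs) :
    es.length = vs.length := by
  induction h with
  | nil => rfl
  | cons _ _ _ ih => simpa using ih

lemma walk_edge_mem {u : V} {es : List E} {vs : List V} (h : G.IsWalk I u es vs)
    {e : E} (he : e ∈ es) : e ∈ I := by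
  induction h with
  | nil => cases he
  | cons hI hinc _ ih =>
    rcases List.mem_cons.mp he with rfl | h'
    · exact hI
    · exact ih h'

lemma walk_restrict {u : V} {es : List E} {vs : List V} (h : G.IsWalk I u es vs)
    (hJ : ∀ e ∈ es, e ∈ J) : G.IsWalk J u es vs := by
  induction h with
  | nil => exact IsWalk.nil _
  | cons hI hinc _ ih =>
    exact IsWalk.cons (hJ _ (by simp)) hinc (ih fun e he => hJ e (by simp [he]))

lemma walk_mono {u : V} {es : List E} {vs : List V} (h : G.IsWalk I u es vs)
    (hIJ : I ⊆ J) : G.IsWalk J u es vs :=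
  walk_restrict h fun e he => hIJ (walk_edge_mem h he)

lemma walk_edge_endpoints {u : V} {es : List E} {vs : List V} (h : G.IsWalk I u es vs)
    {e : E} (he : e ∈ es) {x : V} (hx : x ∈ G.inc e) : x ∈ u::vs := by
  induction h with
  | nil => cases he
  | cons hI hinc _ ih =>
    rcases List.mem_cons.mp he with rfl | h'
    · rw [hinc] at hx
      rcases Sym2.mem_iff.mp hx with rfl | rfl
      · exact List.mem_cons_self
      · exact List.mem_cons_of_mem _ (List.mem_cons_self)
    · exact List.mem_cons_of_mem _ (ih h')

lemma walk_append {u b : V} {es₁ es₂ : List E} {vs₁ vs₂ : List V}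
    (h₁ : G.IsWalk I u es₁ vs₁) (hb : lastV u vs₁ = b) (h₂ : G.IsWalk I b es₂ vs₂) :
    G.IsWalk I u (es₁ ++ es₂) (vs₁ ++ vs₂) := by
  induction h₁ generalizing b with
  | nil => simp only [lastV_nil] at hb; subst hb; simpa using h₂
  | cons hI hinc _ ih =>
    exact IsWalk.cons hI hinc (ih (by simpa using hb) h₂)

lemma walk_split {u : V} {es : List E} {vs : List V} (h : G.IsWalk I u es vs)
    {x : V} (hx : x ∈ u::vs) :
    ∃ es₁ es₂ vs₁ vs₂, es = es₁ ++ es₂ ∧ vs = vs₁ ++ vs₂ ∧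
      G.IsWalk I u es₁ vs₁ ∧ lastV u vs₁ = x ∧ G.IsWalk I x es₂ vs₂ := by
  induction h with
  | nil =>
    rcases List.mem_singleton.mp hx with rfl
    exact ⟨[], [], [], [], rfl, rfl, IsWalk.nil _, rfl, IsWalk.nil _⟩
  | @cons u v e es vs hI hinc hw ih =>
    rcases List.mem_cons.mp hx with rfl | hx'
    · exact ⟨[], e::es, [], v::vs, rfl, rfl, IsWalk.nil _, rfl, IsWalk.cons hI hinc hw⟩
    · obtain ⟨es₁, es₂, vs₁, vs₂, rfl, rfl, hw₁, hlast, hw₂⟩ := ih hx'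
      exact ⟨e::es₁, es₂, v::vs₁, vs₂, rfl, rfl, IsWalk.cons hI hinc hw₁,
        by simpa using hlast, hw₂⟩

lemma walk_nodup_edges {u : V} {es : List E} {vs : List V} (h : G.IsWalk I u es vs)
    (hnd : (u::vs).Nodup) : es.Nodup := by
  induction h with
  | nil => exact List.nodup_nil
  | @cons u v e es vs hI hinc hw ih =>
    have hnd' : (v::vs).Nodup := (List.nodup_cons.mp hnd).2
    refine List.nodup_cons.mpr ⟨fun he => ?_, ih hnd'⟩
    have : u ∈ v::vs := walk_edge_endpoints hw he (by rw [hinc]; simp)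
    exact (List.nodup_cons.mp hnd).1 this

lemma walk_incident_last_unique {u : V} {es : List E} {vs : List V}
    (h : G.IsWalk I u es vs) (hnd : (u::vs).Nodup) {e f : E} (he : e ∈ es) (hf : f ∈ es)
    (hbe : lastV u vs ∈ G.inc e) (hbf : lastV u vs ∈ G.inc f) : e = f := by
  induction h with
  | nil => cases he
  | @cons u v e₀ es vs hI hinc hw ih =>
    have hnd' : (v::vs).Nodup := (List.nodup_cons.mp hnd).2
    have hkey : ∀ g ∈ e₀::es, lastV u (v::vs) ∈ G.inc g → g = e₀ → vs = [] := by
      intro g _ hbg hge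
      subst hge
      rw [hinc] at hbg
      have hmem : lastV v vs ∈ v::vs := lastV_mem v vs
      rcases Sym2.mem_iff.mp (by simpa using hbg) with h' | h'
      · exfalso
        rw [h'] at hmem
        exact (List.nodup_cons.mp hnd).1 hmem
      · exact lastV_self_nil h' hnd'
    rcases List.mem_cons.mp he with rfl | he' <;> rcases List.mem_cons.mp hf with rfl | hf'
    · rfl
    · have hvs : vs = [] := hkey e he hbe rfl
      subst hvs
      have : es = [] := by
        have := walk_length hw; simp at this; exact this
      simp [this] at hf'
    · have hvs : vs = [] := hkey f hf hbf rfl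
      subst hvs
      have : es = [] := by
        have := walk_length hw; simp at this; exact this
      simp [this] at he'
    · exact ih hnd' he' hf' (by simpa using hbe) (by simpa using hbf)

lemma walk_verts_mem {u : V} {es : List E} {vs : List V} (h : G.IsWalk I u es vs)
    {x : V} (hx : x ∈ G.verts {e | e ∈ es}) : x ∈ u::vs := by
  obtain ⟨e, he, hxe⟩ := hx
  exact walk_edge_endpoints h he hxe

lemma walk_mem_verts {u : V} {es : List E} {vs : List V} (h : G.IsWalk I u es vs)
    (hne : es ≠ []) {x : V} (hx : x ∈ u::vs) : x ∈ G.verts {e | e ∈ es} := by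
  induction h with
  | nil => exact absurd rfl hne
  | @cons u v e es vs hI hinc hw ih =>
    rcases List.mem_cons.mp hx with rfl | hx'
    · exact ⟨e, by simp, by rw [hinc]; simp⟩
    · rcases List.eq_nil_or_concat es with rfl | ⟨es', f, rfl⟩
      · have : vs = [] := by
          have := walk_length hw; simp at this; exact List.length_eq_zero_iff.mp this.symm
        subst this
        refine ⟨e, by simp, ?_⟩
        rw [hinc]
        rcases List.mem_singleton.mp hx' with rfl
        simp
      · obtain ⟨f', hf', hxf'⟩ := ih (by simp) hx'
        exact ⟨f', by simp_all, hxf'⟩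

lemma isWalkFrom_iff {u w : V} {es : List E} {vs : List V} :
    G.IsWalkFrom I u es vs w ↔ G.IsWalk I u es vs ∧ lastV u vs = w := Iff.rfl

lemma reachable_refl (u : V) : G.Reachable I u u := ⟨[], [], IsWalk.nil _, rfl⟩

lemma reachable_mono {u w : V} (h : G.Reachable I u w) (hIJ : I ⊆ J) :
    G.Reachable J u w := by
  obtain ⟨es, vs, hw, hl⟩ := h
  exact ⟨es, vs, walk_mono hw hIJ, hl⟩

lemma cycle_mono {v : V} {es : List E} {vs : List V} (h : G.IsCycle I v es vs)
    (hIJ : I ⊆ J) : G.IsCycle J v es vs :=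
  ⟨⟨walk_mono h.1.1 hIJ, h.1.2⟩, h.2⟩

lemma isCycleIn_mono {X : Set E} (h : G.IsCycleIn I X) (hIJ : I ⊆ J) :
    G.IsCycleIn J X := by
  obtain ⟨v, es, vs, hc, rfl⟩ := h
  exact ⟨v, es, vs, cycle_mono hc hIJ, rfl⟩

lemma cycle_base_mem_verts {v : V} {es : List E} {vs : List V}
    (h : G.IsCycle I v es vs) : v ∈ G.verts {e | e ∈ es} :=
  walk_mem_verts h.1.1 h.2.1 (List.mem_cons_self)

lemma cycle_edges_subset {v : V} {es : List E} {vs : List V} (h : G.IsCycle I v es vs) :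
    {e | e ∈ es} ⊆ I := fun _ he => walk_edge_mem h.1.1 he

lemma isCycleIn_subset {X : Set E} (h : G.IsCycleIn I X) : X ⊆ I := by
  obtain ⟨v, es, vs, hc, rfl⟩ := h
  exact cycle_edges_subset hc

lemma bicircIndep_mono (h : G.BicircIndep I) (hJI : J ⊆ I) : G.BicircIndep J := by
  intro C₁ C₂ h₁ h₂ hlink
  obtain ⟨u, w, hu, hw, hr⟩ := hlink
  exact h C₁ C₂ (isCycleIn_mono h₁ hJI) (isCycleIn_mono h₂ hJI)
    ⟨u, w, hu, hw, reachable_mono hr hJI⟩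

lemma walk_nil_inv {u : V} {vs : List V} (h : G.IsWalk I u [] vs) : vs = [] := by
  cases h; rfl

lemma walk_cons_inv {u : V} {e : E} {es : List E} {vs : List V}
    (h : G.IsWalk I u (e::es) vs) :
    ∃ x vs', vs = x::vs' ∧ e ∈ I ∧ G.inc e = s(u, x) ∧ G.IsWalk I x es vs' := by
  cases h with
  | cons hI hinc hw => exact ⟨_, _, rfl, hI, hinc, hw⟩

lemma sym2_loop_eq {a b v : V} (h : s(a,b) = s(v,v)) : a = v ∧ b = v := by
  rcases Sym2.eq_iff.mp h with ⟨h1, h2⟩ | ⟨h1, h2⟩ <;> exact ⟨h1, h2⟩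

section Pendant

variable {C : Set E} {d : E} {v : V}

/-- Walks starting away from a vertex `v` whose only incident edge is a loop `d`
never visit `v`. -/
lemma walk_avoid_loopvert (hd : G.inc d = s(v, v)) (Hv : ∀ e ∈ C, v ∈ G.inc e → e = d)
    {a : V} {es : List E} {vs : List V} (h : G.IsWalk C a es vs) (ha : a ≠ v) :
    ∀ x ∈ vs, x ≠ v := by
  induction es generalizing a vs with
  | nil => rw [walk_nil_inv h]; simp
  | cons e es ih =>
    obtain ⟨x, vs', rfl, hI, hinc, hw⟩ := walk_cons_inv h
    have hx : x ≠ v := by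
      rintro rfl
      have hed : e = d := Hv e hI (by rw [hinc]; simp)
      subst hed
      rw [hd] at hinc
      exact ha (sym2_loop_eq hinc.symm).1
    intro y hy
    rcases List.mem_cons.mp hy with rfl | hy'
    · exact hx
    · exact ih hw hx y hy'

lemma walk_avoid_loopedge (hd : G.inc d = s(v, v)) (Hv : ∀ e ∈ C, v ∈ G.inc e → e = d)
    {a : V} {es : List E} {vs : List V} (h : G.IsWalk C a es vs) (ha : a ≠ v) :
    ∀ e ∈ es, e ≠ d := by
  intro e he hed
  subst hed
  have : v ∈ a::vs := walk_edge_endpoints h he (by rw [hd]; simp)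
  rcases List.mem_cons.mp this with h' | h'
  · exact ha h'.symm
  · exact walk_avoid_loopvert hd Hv h ha v h' rfl

lemma walk_loopvert_stay (hd : G.inc d = s(v, v)) (Hv : ∀ e ∈ C, v ∈ G.inc e → e = d)
    {a : V} {es : List E} {vs : List V} (h : G.IsWalk C a es vs) (ha : a = v) :
    ∀ x ∈ vs, x = v := by
  induction es generalizing a vs with
  | nil => rw [walk_nil_inv h]; simp
  | cons e es ih =>
    obtain ⟨x, vs', rfl, hI, hinc, hw⟩ := walk_cons_inv h
    have hed : e = d := Hv e hI (by rw [hinc, ← ha]; simp)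
    have hx : x = v := by
      have h2 : s(a, x) = s(v, v) := by rw [← hinc, hed, hd]
      exact (sym2_loop_eq h2).2
    intro y hy
    rcases List.mem_cons.mp hy with rfl | hy'
    · exact hx
    · exact ih hw hx y hy'

/-- A cycle through a loop `d` at a vertex whose only incident edge is `d`
is the loop itself. -/
lemma cycle_loopvert (hd : G.inc d = s(v, v)) (Hv : ∀ e ∈ C, v ∈ G.inc e → e = d)
    {v₀ : V} {es : List E} {vs : List V} (h : G.IsCycle C v₀ es vs) (hmem : d ∈ es) :
    es = [d] := by
  obtain ⟨⟨hw, hlast⟩, hne, hnde, hndv⟩ := h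
  rw [lastV_eq_getLast] at hlast
  have hv₀ : v₀ = v := by
    by_contra hne'
    have hvv : v ∈ v₀::vs := walk_edge_endpoints hw hmem (by rw [hd]; simp)
    rcases List.mem_cons.mp hvv with h' | h'
    · exact hne' h'.symm
    · exact walk_avoid_loopvert hd Hv hw hne' v h' rfl
  rcases es with _ | ⟨e, es'⟩
  · cases hmem
  · obtain ⟨x, vs', rfl, hI, hinc, hw'⟩ := walk_cons_inv hw
    have he : e = d := Hv e hI (by rw [hinc, ← hv₀]; simp)
    have hx : x = v := by
      have h2 : s(v₀, x) = s(v, v) := by rw [← hinc, he, hd]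
      exact (sym2_loop_eq h2).2
    rcases es' with _ | ⟨e', es''⟩
    · rw [he]
    · exfalso
      obtain ⟨y, vs'', rfl, hI', hinc', hw''⟩ := walk_cons_inv hw'
      have he' : e' = d := Hv e' hI' (by rw [hinc', ← hx]; simp)
      rw [he, he'] at hnde
      simp at hnde

variable {bv : V}

/-- A walk with distinct edges that starts away from `v` and uses the pendant edge
`d` at `v` must end at `v`. -/
lemma walk_pendant_ends (hd : G.inc d = s(bv, v)) (hbv : bv ≠ v)
    (Hv : ∀ e ∈ C, v ∈ G.inc e → e = d)
    {a : V} {es : List E} {vs : List V} (h : G.IsWalk C a es vs) (ha : a ≠ v)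
    (hmem : d ∈ es) (hnd : es.Nodup) : lastV a vs = v := by
  induction es generalizing a vs with
  | nil => cases hmem
  | cons e es ih =>
    obtain ⟨x, vs', rfl, hI, hinc, hw⟩ := walk_cons_inv h
    by_cases hed : e = d
    · have h2 : s(a, x) = s(bv, v) := by rw [← hinc, hed, hd]
      have hx : x = v := by
        rcases Sym2.eq_iff.mp h2 with ⟨_, h2'⟩ | ⟨h1', _⟩
        · exact h2'
        · exact absurd h1' ha
      rcases es with _ | ⟨e', es''⟩
      · rw [walk_nil_inv hw]; simp [hx]
      · exfalso
        obtain ⟨y, vs'', rfl, hI', hinc', hw''⟩ := walk_cons_inv hw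
        have he' : e' = d := Hv e' hI' (by rw [hinc', ← hx]; simp)
        rw [hed, he'] at hnd
        simp at hnd
    · have hmem' : d ∈ es := by
        rcases List.mem_cons.mp hmem with h' | h'
        · exact absurd h'.symm hed
        · exact h'
      have hx : x ≠ v := by
        rintro rfl
        exact hed (Hv e hI (by rw [hinc]; simp))
      rw [lastV_cons]
      exact ih hw hx hmem' (List.nodup_cons.mp hnd).2

/-- A walk starting away from `v` not using the pendant edge `d` never visits `v`. -/
lemma walk_no_pendant_avoid (Hv : ∀ e ∈ C, v ∈ G.inc e → e = d)
    {a : V} {es : List E} {vs : List V} (h : G.IsWalk C a es vs) (ha : a ≠ v)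
    (hnd : d ∉ es) : ∀ x ∈ vs, x ≠ v := by
  induction es generalizing a vs with
  | nil => rw [walk_nil_inv h]; simp
  | cons e es ih =>
    obtain ⟨x, vs', rfl, hI, hinc, hw⟩ := walk_cons_inv h
    have hx : x ≠ v := by
      rintro rfl
      exact hnd (List.mem_cons.mpr (Or.inl (Hv e hI (by rw [hinc]; simp)).symm))
    intro y hy
    rcases List.mem_cons.mp hy with rfl | hy'
    · exact hx
    · exact ih hw hx (fun h' => hnd (List.mem_cons_of_mem _ h')) y hy'

/-- No cycle uses a pendant (non-loop) edge. -/
lemma cycle_no_pendant (hd : G.inc d = s(bv, v)) (hbv : bv ≠ v)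
    (Hv : ∀ e ∈ C, v ∈ G.inc e → e = d)
    {v₀ : V} {es : List E} {vs : List V} (h : G.IsCycle C v₀ es vs) (hmem : d ∈ es) :
    False := by
  obtain ⟨⟨hw, hlast⟩, hne, hnde, hndv⟩ := h
  rw [lastV_eq_getLast] at hlast
  by_cases hv₀ : v₀ = v
  · rcases es with _ | ⟨e, es'⟩
    · cases hmem
    · obtain ⟨x, vs', rfl, hI, hinc, hw'⟩ := walk_cons_inv hw
      have he : e = d := Hv e hI (by rw [hinc, ← hv₀]; simp)
      have h2 : s(v₀, x) = s(bv, v) := by rw [← hinc, he, hd]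
      have hx : x = bv := by
        rcases Sym2.eq_iff.mp h2 with ⟨h1', _⟩ | ⟨_, h2'⟩
        · exact absurd (hv₀ ▸ h1'.symm :  bv = v) hbv
        · exact h2'
      have hnomem : d ∉ es' := by
        rw [he] at hnde
        simpa using (List.nodup_cons.mp hnde).1
      have hxv : x ≠ v := fun h' => hbv (hx ▸ h')
      have hnov : ∀ y ∈ vs', y ≠ v :=
        walk_no_pendant_avoid Hv hw' hxv hnomem
      have hend : lastV x vs' = v := by
        have : lastV v₀ (x::vs') = v₀ := hlast
        rw [lastV_cons] at this
        rw [this, hv₀]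
      rcases List.mem_cons.mp (lastV_mem x vs') with h' | h'
      · rw [hend] at h'; exact hxv h'.symm
      · rw [hend] at h'; exact hnov v h' rfl
  · have := walk_pendant_ends hd hbv Hv hw hv₀ hmem hnde
    rw [hlast] at this
    exact hv₀ this

/-- Excising uses of a pendant edge from a walk. -/
lemma walk_pendant_excise (hd : G.inc d = s(bv, v)) (hbv : bv ≠ v)
    (Hv : ∀ e ∈ C, v ∈ G.inc e → e = d) :
    ∀ n {es : List E} {vs : List V} {a : V}, es.length ≤ n → G.IsWalk C a es vs →
      a ≠ v → lastV a vs ≠ v →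
      ∃ es' vs', G.IsWalk (C \ {d}) a es' vs' ∧ lastV a vs' = lastV a vs := by
  intro n
  induction n with
  | zero =>
    intro es vs a hlen hw _ _
    have : es = [] := List.length_eq_zero_iff.mp (Nat.le_zero.mp hlen)
    subst this
    rw [walk_nil_inv hw]
    exact ⟨[], [], IsWalk.nil _, rfl⟩
  | succ n ih =>
    intro es vs a hlen hw ha hlast
    rcases es with _ | ⟨e, es'⟩
    · rw [walk_nil_inv hw]
      exact ⟨[], [], IsWalk.nil _, rfl⟩
    · obtain ⟨x, vs', rfl, hI, hinc, hw'⟩ := walk_cons_inv hw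
      by_cases hed : e = d
      · have h2 : s(a, x) = s(bv, v) := by rw [← hinc, hed, hd]
        have hax : a = bv ∧ x = v := by
          rcases Sym2.eq_iff.mp h2 with ⟨h1', h2'⟩ | ⟨h1', _⟩
          · exact ⟨h1', h2'⟩
          · exact absurd h1' ha
        rcases es' with _ | ⟨e', es''⟩
        · exfalso
          rw [walk_nil_inv hw'] at hlast
          exact hlast (by simp [hax.2])
        · obtain ⟨y, vs'', rfl, hI', hinc', hw''⟩ := walk_cons_inv hw'
          have he' : e' = d := Hv e' hI' (by rw [hinc', ← hax.2]; simp)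
          have h3 : s(x, y) = s(bv, v) := by rw [← hinc', he', hd]
          have hy : y = a := by
            rcases Sym2.eq_iff.mp h3 with ⟨h1', _⟩ | ⟨_, h2'⟩
            · exact absurd (hax.2 ▸ h1' : v = bv).symm hbv
            · rw [h2', hax.1]
          have hw2 : G.IsWalk C a es'' vs'' := hy ▸ hw''
          have heq : lastV a (x::y::vs'') = lastV a vs'' := by
            simp only [lastV_cons]; rw [hy]
          have hlen' : es''.length ≤ n := by simp at hlen; omega
          obtain ⟨es₀, vs₀, hw₀, hl₀⟩ := ih hlen' hw2 ha (by rw [← heq]; exact hlast)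
          exact ⟨es₀, vs₀, hw₀, by rw [hl₀, heq]⟩
      · have hx : x ≠ v := by
          rintro rfl
          exact hed (Hv e hI (by rw [hinc]; simp))
        have hlen' : es'.length ≤ n := by simp at hlen; omega
        obtain ⟨es₀, vs₀, hw₀, hl₀⟩ := ih hlen' hw' hx (by simpa using hlast)
        exact ⟨e::es₀, x::vs₀, IsWalk.cons ⟨hI, hed⟩ hinc hw₀, by simpa using hl₀⟩

/-- Removing a pendant edge preserves the existence of two linked distinct cycles. -/
lemma not_bicircIndep_pendant (hdC : d ∈ C) (hd : G.inc d = s(bv, v)) (hbv : bv ≠ v)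
    (Hv : ∀ e ∈ C, v ∈ G.inc e → e = d) (h : ¬ G.BicircIndep C) :
    ¬ G.BicircIndep (C \ {d}) := by
  unfold Multigraph.BicircIndep at h ⊢
  push_neg at h ⊢
  obtain ⟨C₁, C₂, h₁, h₂, hlink, hne⟩ := h
  have hd₁ : d ∉ C₁ := by
    intro hdm
    obtain ⟨v₁, es₁, vs₁, hc₁, rfl⟩ := h₁
    exact cycle_no_pendant hd hbv Hv hc₁ hdm
  have hd₂ : d ∉ C₂ := by
    intro hdm
    obtain ⟨v₂, es₂, vs₂, hc₂, rfl⟩ := h₂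
    exact cycle_no_pendant hd hbv Hv hc₂ hdm
  have hcyc : ∀ (X : Set E), G.IsCycleIn C X → d ∉ X → G.IsCycleIn (C \ {d}) X := by
    rintro X ⟨v₁, es₁, vs₁, hc₁, rfl⟩ hdm
    refine ⟨v₁, es₁, vs₁, ⟨⟨walk_restrict hc₁.1.1 fun e he =>
      ⟨walk_edge_mem hc₁.1.1 he, fun hed => hdm (hed ▸ he)⟩, hc₁.1.2⟩, hc₁.2⟩, rfl⟩
  have hvnot : ∀ (X : Set E), G.IsCycleIn C X → d ∉ X → v ∉ G.verts X := by
    rintro X hX hdm ⟨e, heX, hve⟩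
    exact hdm ((Hv e (isCycleIn_subset hX heX) hve) ▸ heX)
  obtain ⟨u, w, hu, hw, hr⟩ := hlink
  have hune : u ≠ v := fun h' => hvnot C₁ h₁ hd₁ (h' ▸ hu)
  have hwne : w ≠ v := fun h' => hvnot C₂ h₂ hd₂ (h' ▸ hw)
  obtain ⟨es, vs, hwk, hl⟩ := hr
  rw [lastV_eq_getLast] at hl
  obtain ⟨es', vs', hwk', hl'⟩ :=
    walk_pendant_excise hd hbv Hv es.length le_rfl hwk hune (by rw [hl]; exact hwne)
  refine ⟨C₁, C₂, hcyc C₁ h₁ hd₁, hcyc C₂ h₂ hd₂, ⟨u, w, hu, hw, es', vs', hwk', ?_⟩, hne⟩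
  rw [lastV_eq_getLast, hl', hl]

/-- Removing an isolated loop preserves the existence of two linked distinct cycles. -/
lemma not_bicircIndep_loopvert (hdC : d ∈ C) (hd : G.inc d = s(v, v))
    (Hv : ∀ e ∈ C, v ∈ G.inc e → e = d) (h : ¬ G.BicircIndep C) :
    ¬ G.BicircIndep (C \ {d}) := by
  unfold Multigraph.BicircIndep at h ⊢
  push_neg at h ⊢
  obtain ⟨C₁, C₂, h₁, h₂, hlink, hne⟩ := h
  obtain ⟨u, w, hu, hw, hr⟩ := hlink
  have key : ∀ (X : Set E), G.IsCycleIn C X → d ∈ X → X = {d} := by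
    rintro X ⟨v₁, es₁, vs₁, hc₁, rfl⟩ hdm
    have := cycle_loopvert hd Hv hc₁ hdm
    subst this
    ext e; simp
  have hvd : ∀ (X : Set E), G.IsCycleIn C X → d ∉ X → v ∉ G.verts X := by
    rintro X hX hdm ⟨e, heX, hve⟩
    exact hdm ((Hv e (isCycleIn_subset hX heX) hve) ▸ heX)
  have hverts_d : G.verts ({d} : Set E) = {v} := by
    ext x
    simp only [Multigraph.verts, Set.mem_setOf_eq, Set.mem_singleton_iff]
    constructor
    · rintro ⟨e, rfl, hxe⟩
      rw [hd] at hxe; rcases Sym2.mem_iff.mp hxe with rfl | rfl <;> rfl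
    · rintro rfl
      exact ⟨d, rfl, by rw [hd]; simp⟩
  have hd₁ : d ∉ C₁ := by
    intro hdm
    have hC₁ : C₁ = {d} := key C₁ h₁ hdm
    have hu' : u = v := by rw [hC₁, hverts_d] at hu; exact hu
    obtain ⟨es, vs, hwk, hl⟩ := hr
    rw [lastV_eq_getLast] at hl
    have hwv : w = v := by
      rcases List.mem_cons.mp (hl ▸ lastV_mem u vs) with h' | h'
      · rw [h', hu']
      · exact walk_loopvert_stay hd Hv hwk hu' w h'
    obtain ⟨e, heC₂, hve⟩ := hw
    have hed : e = d := Hv e (isCycleIn_subset h₂ heC₂) (hwv ▸ hve)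
    exact hne (hC₁.trans (key C₂ h₂ (hed ▸ heC₂)).symm)
  have hd₂ : d ∉ C₂ := by
    intro hdm
    have hC₂ : C₂ = {d} := key C₂ h₂ hdm
    have hw' : w = v := by rw [hC₂, hverts_d] at hw; exact hw
    have hune : u ≠ v := fun h' => hvd C₁ h₁ hd₁ (h' ▸ hu)
    obtain ⟨es, vs, hwk, hl⟩ := hr
    rw [lastV_eq_getLast] at hl
    rcases List.mem_cons.mp (hl ▸ lastV_mem u vs) with h' | h'
    · exact hune (h' ▸ hw')
    · exact (walk_avoid_loopvert hd Hv hwk hune w h') hw' 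
  have hcyc : ∀ (X : Set E), G.IsCycleIn C X → d ∉ X → G.IsCycleIn (C \ {d}) X := by
    rintro X ⟨v₁, es₁, vs₁, hc₁, rfl⟩ hdm
    refine ⟨v₁, es₁, vs₁, ⟨⟨walk_restrict hc₁.1.1 fun e he =>
      ⟨walk_edge_mem hc₁.1.1 he, fun hed => hdm (hed ▸ he)⟩, hc₁.1.2⟩, hc₁.2⟩, rfl⟩
  have hune : u ≠ v := fun h' => hvd C₁ h₁ hd₁ (h' ▸ hu)
  obtain ⟨es, vs, hwk, hl⟩ := hr
  have hnod : ∀ e ∈ es, e ≠ d := walk_avoid_loopedge hd Hv hwk hune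
  refine ⟨C₁, C₂, hcyc C₁ h₁ hd₁, hcyc C₂ h₂ hd₂,
    ⟨u, w, hu, hw, es, vs, walk_restrict hwk fun e he =>
      ⟨walk_edge_mem hwk he, hnod e he⟩, hl⟩, hne⟩

end Pendant

section Grow

lemma inc_exists (G : Multigraph V E) (e : E) : ∃ a b, G.inc e = s(a, b) := by
  induction G.inc e using Sym2.ind with
  | _ a b => exact ⟨a, b, rfl⟩

lemma sym2_set_finite (z : Sym2 V) : {x | x ∈ z}.Finite := by
  induction z using Sym2.ind with
  | _ a b =>
    have : {x | x ∈ s(a,b)} = {a, b} := by ext x; simp [Sym2.mem_iff]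
    rw [this]; exact (Set.finite_singleton b).insert a

lemma verts_finite (hI : I.Finite) : (G.verts I).Finite := by
  have : G.verts I ⊆ ⋃ e ∈ I, {x | x ∈ G.inc e} := by
    rintro v ⟨e, he, hv⟩
    exact Set.mem_biUnion he hv
  exact (hI.biUnion fun e _ => sym2_set_finite (G.inc e)).subset this

lemma list_ncard {α : Type*} {l : List α} (h : l.Nodup) : {x | x ∈ l}.ncard = l.length := by
  classical
  have : {x | x ∈ l} = ↑l.toFinset := by ext x; simp
  rw [this, Set.ncard_coe_finset, List.toFinset_card_of_nodup h]

variable {K : Set E} {F : Set V}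

lemma exists_second_edge (hK : K.Finite) {b : V} (hdeg : 2 ≤ G.degree K b)
    (hnoloop : ∀ e ∈ K, G.inc e ≠ s(b, b)) {e₀ : E} (he₀ : e₀ ∈ K)
    (hbe₀ : b ∈ G.inc e₀) : ∃ e' ∈ K, b ∈ G.inc e' ∧ e' ≠ e₀ := by
  have hB : {e ∈ K | G.inc e = s(b,b)} = ∅ := by
    ext e; simp only [Set.mem_setOf_eq, Set.mem_empty_iff_false, iff_false, not_and]
    exact fun he => hnoloop e he
  have hA : 2 ≤ {e ∈ K | b ∈ G.inc e}.ncard := by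
    have := hdeg
    unfold Multigraph.degree at this
    rw [hB] at this
    simpa using this
  by_contra hcon
  push_neg at hcon
  have hsub : {e ∈ K | b ∈ G.inc e} ⊆ {e₀} := by
    rintro e ⟨heK, hbe⟩
    by_contra hne
    exact hne (hcon e heK hbe)
  have := Set.ncard_le_ncard hsub (Set.finite_singleton _)
  simp at this
  omega

/-- Core walk-growing lemma: starting from a nonempty self-avoiding walk, either
we find a cycle (reachable from the start) or we reach the forbidden set `F`. -/
lemma grow (hK : K.Finite)
    (hdeg : ∀ v ∈ G.verts K, v ∉ F → 2 ≤ G.degree K v) :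
    ∀ n (u₀ : V) (es : List E) (vs : List V),
      (G.verts K \ {v | v ∈ u₀::vs}).ncard ≤ n →
      G.IsWalk K u₀ es vs → es ≠ [] → (u₀::vs).Nodup → (∀ v ∈ vs, v ∉ F) →
      (∃ X, G.IsCycleIn K X ∧ ∃ y ∈ G.verts X, G.Reachable K u₀ y) ∨
      (∃ x es' vs'', x ∈ F ∧ G.IsWalk K u₀ es' (vs''++[x]) ∧
        (u₀::(vs''++[x])).Nodup ∧ (∀ v ∈ vs'', v ∉ F) ∧ es' ≠ []) := by
  intro n
  induction n using Nat.strong_induction_on with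
  | _ n ih =>
  intro u₀ es vs hmeas hw hne hnd hF
  have hvs : vs ≠ [] := by
    rintro rfl
    exact hne (List.length_eq_zero_iff.mp (by simpa using walk_length hw))
  set b := lastV u₀ vs with hb
  have hbvs : b ∈ vs := lastV_mem_of_ne_nil u₀ hvs
  have hbF : b ∉ F := hF b hbvs
  obtain ⟨el, hel, hbel⟩ : ∃ e ∈ es, b ∈ G.inc e :=
    walk_mem_verts hw hne (List.mem_cons_of_mem _ hbvs)
  have helK : el ∈ K := walk_edge_mem hw hel
  have hbK : b ∈ G.verts K := ⟨el, helK, hbel⟩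
  by_cases hloop : ∃ ℓ ∈ K, G.inc ℓ = s(b, b)
  · obtain ⟨ℓ, hℓK, hℓ⟩ := hloop
    left
    refine ⟨{e | e ∈ [ℓ]}, ⟨b, [ℓ], [b], ⟨⟨IsWalk.cons hℓK hℓ (IsWalk.nil _), rfl⟩,
      by simp, by simp, by simp⟩, rfl⟩, b, ⟨ℓ, by simp, by rw [hℓ]; simp⟩,
      es, vs, hw, rfl⟩
  · push_neg at hloop
    obtain ⟨e', he'K, hbe', hne'⟩ := exists_second_edge hK (hdeg b hbK hbF) hloop helK hbel
    have he'es : e' ∉ es := by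
      intro hmem
      exact hne' (walk_incident_last_unique hw hnd hmem hel hbe' hbel)
    obtain ⟨x, hx⟩ := Sym2.mem_iff_exists.mp hbe'
    have hxb : x ≠ b := by
      rintro rfl
      exact hloop e' he'K hx
    by_cases hxin : x ∈ u₀::vs
    · -- found a cycle
      left
      obtain ⟨es₁, es₂, vs₁, vs₂, rfl, rfl, hw₁, hl₁, hw₂⟩ := walk_split hw hxin
      have hl₂ : lastV x vs₂ = b := by
        rw [hb, lastV_append, hl₁]
      have hvs₂ : vs₂ ≠ [] := by
        rintro rfl
        exact hxb (by simpa using hl₂)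
      have hesnd : (es₁ ++ es₂).Nodup := walk_nodup_edges hw hnd
      have hnd' : ((u₀::vs₁) ++ vs₂).Nodup := by simpa using hnd
      have hxvs₂ : x ∉ vs₂ := by
        have hxin₁ : x ∈ u₀::vs₁ := hl₁ ▸ lastV_mem u₀ vs₁
        exact fun hc => (List.disjoint_left.mp (List.nodup_append'.mp hnd').2.2) hxin₁ hc
      refine ⟨{e | e ∈ es₂ ++ [e']}, ⟨x, es₂ ++ [e'], vs₂ ++ [x],
        ⟨⟨walk_append hw₂ hl₂ (IsWalk.cons he'K (by rw [hx]) (IsWalk.nil _)), by simp⟩,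
          by simp, ?_, ?_⟩, rfl⟩, x, ?_, es₁, vs₁, hw₁, hl₁⟩
      · -- edge nodup
        refine List.nodup_append'.mpr ⟨(List.nodup_append'.mp hesnd).2.1, by simp, ?_⟩
        simp only [List.disjoint_singleton]
        intro hc
        exact he'es (List.mem_append.mpr (Or.inr hc))
      · refine List.nodup_append'.mpr ⟨(List.nodup_append'.mp (List.nodup_cons.mp hnd').2).2.1,
          by simp, by simpa using hxvs₂⟩
      · exact ⟨e', by simp, by rw [hx]; simp⟩
    · have hxK : x ∈ G.verts K := ⟨e', he'K, by rw [hx]; simp⟩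
      have hwext : G.IsWalk K u₀ (es ++ [e']) (vs ++ [x]) :=
        walk_append hw rfl (IsWalk.cons he'K (by rw [hx]) (IsWalk.nil _))
      have hndext : (u₀::(vs ++ [x])).Nodup := by
        rw [show u₀::(vs ++ [x]) = (u₀::vs) ++ [x] from rfl]
        exact List.nodup_append'.mpr ⟨hnd, by simp, by simpa using hxin⟩
      by_cases hxF : x ∈ F
      · exact Or.inr ⟨x, es ++ [e'], vs, hxF, hwext, hndext, hF, by simp⟩
      · -- extend the walk; measure decreases
        have hxdiff : x ∈ G.verts K \ {v | v ∈ u₀::vs} := ⟨hxK, hxin⟩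
        have hfin : (G.verts K \ {v | v ∈ u₀::vs}).Finite := (verts_finite hK).diff
        have hset : G.verts K \ {v | v ∈ u₀::(vs ++ [x])} =
            (G.verts K \ {v | v ∈ u₀::vs}) \ {x} := by
          ext y
          simp only [Set.mem_diff, Set.mem_setOf_eq, Set.mem_singleton_iff, List.mem_cons,
            List.mem_append, List.mem_singleton]
          tauto
        have hlt : (G.verts K \ {v | v ∈ u₀::(vs ++ [x])}).ncard <
            (G.verts K \ {v | v ∈ u₀::vs}).ncard := by
          rw [hset]
          have h1 : (G.verts K \ {v | v ∈ u₀::vs}).ncard ≠ 0 := by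
            intro h0
            have := (Set.ncard_eq_zero hfin).mp h0
            rw [this] at hxdiff
            exact hxdiff
          rw [Set.ncard_diff_singleton_of_mem hxdiff]
          omega
        have hmeas' : (G.verts K \ {v | v ∈ u₀::(vs ++ [x])}).ncard <  n :=
          lt_of_lt_of_le hlt hmeas
        exact ih _ hmeas' u₀ (es ++ [e']) (vs ++ [x]) le_rfl hwext (by simp) hndext
          (by intro v hv
              rcases List.mem_append.mp hv with h' | h'
              · exact hF v h'
              · rcases List.mem_singleton.mp h' with rfl
                exact hxF)

/-- In a finite nonempty graph with minimum degree `2`, there is a cycle. -/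
lemma exists_cycle_of_min_degree (hK : K.Finite) (hne : K.Nonempty)
    (hdeg : ∀ v ∈ G.verts K, 2 ≤ G.degree K v) :
    ∃ v es vs, G.IsCycle K v es vs := by
  obtain ⟨e₀, he₀⟩ := hne
  obtain ⟨a, b, hab'⟩ := inc_exists G e₀
  by_cases hab : a = b
  · exact ⟨a, [e₀], [a], ⟨⟨IsWalk.cons he₀ (by rw [hab'] ; rw [hab]) (IsWalk.nil _), rfl⟩,
      by simp, by simp, by simp⟩⟩
  · have := grow (F := (∅ : Set V)) hK (fun v hv _ => hdeg v hv)
      (G.verts K \ {v | v ∈ [a, b]}).ncard a [e₀] [b] le_rfl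
      (IsWalk.cons he₀ hab' (IsWalk.nil _)) (by simp) (by simp [hab]) (by simp)
    rcases this with ⟨X, hX, _⟩ | ⟨x, _, _, hx, _⟩
    · obtain ⟨v, es, vs, hc, _⟩ := hX
      exact ⟨v, es, vs, hc⟩
    · exact absurd hx (Set.notMem_empty x)

/-- Rebasing a cycle at any of its vertices. -/
lemma cycle_rot {z₀ : V} {esZ : List E} {vsZ : List V} (hc : G.IsCycle I z₀ esZ vsZ)
    {w : V} (hw : w ∈ z₀::vsZ) :
    ∃ esR vsR, G.IsCycle I w esR vsR ∧ {e | e ∈ esR} = {e | e ∈ esZ} := by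
  obtain ⟨⟨hwk, hlast⟩, hne, hnde, hndv⟩ := hc
  rw [lastV_eq_getLast] at hlast
  obtain ⟨es₁, es₂, vs₁, vs₂, rfl, rfl, hw₁, hl₁, hw₂⟩ := walk_split hwk hw
  have hl₂ : lastV w vs₂ = z₀ := by
    rw [← hl₁, ← lastV_append, hlast]
  refine ⟨es₂ ++ es₁, vs₂ ++ vs₁, ⟨⟨walk_append hw₂ hl₂ hw₁, ?_⟩, ?_, ?_, ?_⟩, ?_⟩
  · rw [lastV_eq_getLast, lastV_append, hl₂, hl₁]
  · intro h
    apply hne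
    have h1 : es₁ = [] := by
      have := congrArg List.length h; simp at this; exact this.2
    have h2 : es₂ = [] := by
      have := congrArg List.length h; simp at this; exact this.1
    rw [h1, h2]; rfl
  · exact (List.perm_append_comm.nodup_iff).mpr hnde
  · exact (List.perm_append_comm.nodup_iff).mpr hndv
  · ext e; simp only [Set.mem_setOf_eq, List.mem_append]; tauto

/-- Gluing a path between two vertices of a cycle with an arc of the cycle
produces a second, distinct cycle. -/
lemma glue_second_cycle {z₀ : V} {esZ : List E} {vsZ : List V}
    (hcZ : G.IsCycle I z₀ esZ vsZ) {w x : V}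
    (hw : w ∈ G.verts {e | e ∈ esZ}) (hx : x ∈ G.verts {e | e ∈ esZ}) (hxw : x ≠ w)
    {esP : List E} {vsP : List V}
    (hP : G.IsWalk (I \ {e | e ∈ esZ}) w esP (vsP ++ [x]))
    (hPnd : (w::(vsP ++ [x])).Nodup) (hPF : ∀ v ∈ vsP, v ∉ G.verts {e | e ∈ esZ})
    (hPne : esP ≠ []) :
    ∃ X, G.IsCycleIn I X ∧ X ≠ {e | e ∈ esZ} ∧ w ∈ G.verts X := by
  have hwlist : w ∈ z₀::vsZ := walk_verts_mem hcZ.1.1 hw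
  obtain ⟨esR, vsR, hcR, hsetR⟩ := cycle_rot hcZ hwlist
  have hxlist : x ∈ w::vsR := walk_verts_mem hcR.1.1 (by rw [hsetR]; exact hx)
  obtain ⟨a₁, a₂, b₁, b₂, rfl, rfl, hwk₁, hl₁, hwk₂⟩ := walk_split hcR.1.1 hxlist
  have hlastR : lastV w (b₁ ++ b₂) = w := hcR.1.2
  have hb₂ne : b₂ ≠ [] := by
    rintro rfl
    rw [List.append_nil] at hlastR
    exact hxw (hl₁.symm.trans hlastR)
  have hl₂ : lastV x b₂ = w := by
    rw [lastV_append, hl₁] at hlastR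
    exact hlastR
  have hndR : (b₁ ++ b₂).Nodup := hcR.2.2.2
  have hndeR : (a₁ ++ a₂).Nodup := hcR.2.2.1
  have hxb₁ : x ∈ w::b₁ := hl₁ ▸ lastV_mem w b₁
  have hxb₂ : x ∉ b₂ := by
    rcases List.mem_cons.mp hxb₁ with h' | h'
    · exact absurd h' hxw
    · exact fun hc => (List.disjoint_left.mp (List.nodup_append'.mp hndR).2.2) h' hc
  have hb₂verts : ∀ v ∈ b₂, v ∈ G.verts {e | e ∈ esZ} := by
    intro v hv
    rw [← hsetR]
    exact walk_mem_verts hcR.1.1 hcR.2.1 (List.mem_cons_of_mem _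
      (List.mem_append.mpr (Or.inr hv)))
  have hPset : ∀ e ∈ esP, e ∉ {e | e ∈ esZ} := fun e he =>
    (walk_edge_mem hP he).2
  have ha₂set : ∀ e ∈ a₂, e ∈ {e | e ∈ esZ} := by
    intro e he
    rw [← hsetR]
    exact List.mem_append.mpr (Or.inr he)
  refine ⟨{e | e ∈ esP ++ a₂}, ⟨w, esP ++ a₂, (vsP ++ [x]) ++ b₂,
    ⟨⟨walk_append (walk_mono hP Set.diff_subset) (lastV_concat _ _ _) hwk₂, ?_⟩,
      by simp [hPne], ?_, ?_⟩, rfl⟩, ?_, ?_⟩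
  · rw [lastV_eq_getLast, lastV_append, lastV_concat, hl₂]
  · refine List.nodup_append'.mpr ⟨walk_nodup_edges hP hPnd,
      (List.nodup_append'.mp hndeR).2.1, ?_⟩
    intro e he hc
    exact hPset e he (ha₂set e hc)
  · refine List.nodup_append'.mpr ⟨(List.nodup_cons.mp hPnd).2,
      (List.nodup_append'.mp hndR).2.1, ?_⟩
    intro v hv hc
    rcases List.mem_append.mp hv with h' | h'
    · exact hPF v h' (hb₂verts v hc)
    · rcases List.mem_singleton.mp h' with rfl
      exact hxb₂ hc
  · obtain ⟨e₀, he₀⟩ := List.exists_mem_of_ne_nil esP hPne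
    intro hXeq
    have : e₀ ∈ {e | e ∈ esZ} := by
      rw [← hXeq]
      exact List.mem_append.mpr (Or.inl he₀)
    exact hPset e₀ he₀ this
  · rcases esP with _ | ⟨ep, est⟩
    · exact absurd rfl hPne
    · obtain ⟨x₁, vs₁', hvs, hmem, hinc, _⟩ := walk_cons_inv hP
      exact ⟨ep, by simp, by rw [hinc]; simp⟩

end Grow

section Counting

lemma verts_mono {I J : Set E} (h : I ⊆ J) : G.verts I ⊆ G.verts J := by
  rintro v ⟨e, he, hv⟩
  exact ⟨e, h he, hv⟩

/-- If `I` is bicircular-independent with min degree `2` and contains a cycle `Z`,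
then no edge outside `Z` touches the vertices of `Z`. -/
lemma bicirc_cycle_isolated (hI : I.Finite) (hBI : G.BicircIndep I)
    {z₀ : V} {esZ : List E} {vsZ : List V} (hcZ : G.IsCycle I z₀ esZ vsZ)
    (hdeg : ∀ v ∈ G.verts I, 2 ≤ G.degree I v) {d : E} (hdI : d ∈ I)
    (hdZ : d ∉ {e | e ∈ esZ}) {w : V} (hwd : w ∈ G.inc d)
    (hwZ : w ∈ G.verts {e | e ∈ esZ}) : False := by
  have hZcyc : G.IsCycleIn I {e | e ∈ esZ} := ⟨z₀, esZ, vsZ, hcZ, rfl⟩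
  have hKfin : (I \ {e | e ∈ esZ}).Finite := hI.diff
  have hdK : d ∈ I \ {e | e ∈ esZ} := ⟨hdI, hdZ⟩
  have hdegK : ∀ v ∈ G.verts (I \ {e | e ∈ esZ}), v ∉ G.verts {e | e ∈ esZ} →
      2 ≤ G.degree (I \ {e | e ∈ esZ}) v := by
    intro v hvK hvF
    have hvI : v ∈ G.verts I := by
      obtain ⟨e, he, hv⟩ := hvK; exact ⟨e, he.1, hv⟩
    have hAeq : {e ∈ I \ {e | e ∈ esZ} | v ∈ G.inc e} = {e ∈ I | v ∈ G.inc e} := by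
      ext e
      constructor
      · rintro ⟨he, hv'⟩; exact ⟨he.1, hv'⟩
      · rintro ⟨he, hv'⟩
        exact ⟨⟨he, fun heZ => hvF ⟨e, heZ, hv'⟩⟩, hv'⟩
    have hBeq : {e ∈ I \ {e | e ∈ esZ} | G.inc e = s(v,v)} =
        {e ∈ I | G.inc e = s(v,v)} := by
      ext e
      constructor
      · rintro ⟨he, hv'⟩; exact ⟨he.1, hv'⟩
      · rintro ⟨he, hv'⟩
        exact ⟨⟨he, fun heZ => hvF ⟨e, heZ, by rw [hv']; simp⟩⟩, hv'⟩
    unfold Multigraph.degree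
    rw [hAeq, hBeq]
    exact hdeg v hvI
  have finish : ∀ X, G.IsCycleIn I X → X ≠ {e | e ∈ esZ} →
      (∃ y ∈ G.verts X, G.Reachable I w y) → False := by
    rintro X hX hne ⟨y, hy, hr⟩
    exact hne (hBI {e | e ∈ esZ} X hZcyc hX ⟨w, y, hwZ, hy, hr⟩).symm
  obtain ⟨u₁, hu₁⟩ := Sym2.mem_iff_exists.mp hwd
  by_cases h1 : u₁ = w
  · refine finish {e | e ∈ [d]} ⟨w, [d], [w], ⟨⟨IsWalk.cons hdI (by rw [hu₁, h1]) (IsWalk.nil _),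
      rfl⟩, by simp, by simp, by simp⟩, rfl⟩ ?_ ⟨w, ⟨d, by simp, hwd⟩, reachable_refl w⟩
    intro hc
    exact hdZ (hc ▸ (by simp : d ∈ {e | e ∈ [d]}))
  · by_cases h2 : u₁ ∈ G.verts {e | e ∈ esZ}
    · obtain ⟨X, hX, hne, hwX⟩ := glue_second_cycle hcZ hwZ h2 h1
        (esP := [d]) (vsP := [])
        (by exact IsWalk.cons hdK hu₁ (IsWalk.nil _))
        (by simp [Ne.symm h1]) (by simp) (by simp)
      exact finish X hX hne ⟨w, hwX, reachable_refl w⟩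
    · have hgrow := grow hKfin hdegK (G.verts (I \ {e | e ∈ esZ})).ncard w [d] [u₁]
        (Set.ncard_le_ncard Set.diff_subset (verts_finite hKfin))
        (IsWalk.cons hdK hu₁ (IsWalk.nil _)) (by simp) (by simp [Ne.symm h1])
        (by simpa using h2)
      rcases hgrow with ⟨X, hXK, y, hyX, hr⟩ | ⟨x, es', vs'', hxF, hPw, hPnd, hPF, hPne⟩
      · refine finish X (isCycleIn_mono hXK Set.diff_subset) ?_
          ⟨y, hyX, reachable_mono hr Set.diff_subset⟩
        intro hc
        obtain ⟨v', es', vs', hc', rfl⟩ := hXK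
        obtain ⟨e₀, he₀⟩ := List.exists_mem_of_ne_nil es' hc'.2.1
        exact (walk_edge_mem hc'.1.1 he₀).2 (hc ▸ (he₀ : e₀ ∈ {e | e ∈ es'}))
      · have hxw : x ≠ w := by
          intro hc
          have := (List.nodup_cons.mp hPnd).1
          exact this (List.mem_append.mpr (Or.inr (by simp [hc])))
        obtain ⟨X, hX, hne, hwX⟩ := glue_second_cycle hcZ hwZ hxF hxw hPw hPnd hPF hPne
        exact finish X hX hne ⟨w, hwX, reachable_refl w⟩

/-- The vertex set of a cycle is the set of entries of its vertex list. -/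
lemma cycle_verts_eq {z₀ : V} {esZ : List E} {vsZ : List V} (hcZ : G.IsCycle I z₀ esZ vsZ) :
    G.verts {e | e ∈ esZ} = {v | v ∈ vsZ} := by
  have hvsne : vsZ ≠ [] := by
    rintro rfl
    exact hcZ.2.1 (List.length_eq_zero_iff.mp (by simpa using walk_length hcZ.1.1))
  have hz₀ : z₀ ∈ vsZ := by
    have := hcZ.1.2
    rw [lastV_eq_getLast] at this
    exact this ▸ lastV_mem_of_ne_nil z₀ hvsne
  ext v
  constructor
  · intro hv
    rcases List.mem_cons.mp (walk_verts_mem hcZ.1.1 hv) with rfl | h'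
    · exact hz₀
    · exact h'
  · intro hv
    exact walk_mem_verts hcZ.1.1 hcZ.2.1 (List.mem_cons_of_mem _ hv)

/-- A finite bicircular-independent edge set has at most as many edges as vertices. -/
lemma bicircIndep_ncard_le :
    ∀ n (I : Set E), I.ncard ≤ n → I.Finite → G.BicircIndep I →
      I.ncard ≤ (G.verts I).ncard := by
  intro n
  induction n using Nat.strong_induction_on with
  | _ n ih =>
  intro I hn hfin hBI
  by_cases h0 : I = ∅
  · simp [h0]
  by_cases hmin : ∀ v ∈ G.verts I, 2 ≤ G.degree I v
  · obtain ⟨z₀, esZ, vsZ, hcZ⟩ :=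
      exists_cycle_of_min_degree hfin (Set.nonempty_iff_ne_empty.mpr h0) hmin
    by_cases hiso : ∀ d ∈ I, d ∉ {e | e ∈ esZ} → ∀ x ∈ G.inc d, x ∉ G.verts {e | e ∈ esZ}
    · -- strip the cycle
      have hZsub : {e | e ∈ esZ} ⊆ I := cycle_edges_subset hcZ
      have hZfin : {e | e ∈ esZ}.Finite := hfin.subset hZsub
      have hvZsub : G.verts {e | e ∈ esZ} ⊆ G.verts I := verts_mono hZsub
      have hvfin : (G.verts I).Finite := verts_finite hfin
      have hvert_eq : G.verts (I \ {e | e ∈ esZ}) = G.verts I \ G.verts {e | e ∈ esZ} := by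
        ext v
        constructor
        · rintro ⟨e, ⟨heI, heZ⟩, hv⟩
          exact ⟨⟨e, heI, hv⟩, hiso e heI heZ v hv⟩
        · rintro ⟨⟨e, heI, hv⟩, hvZ⟩
          refine ⟨e, ⟨heI, fun heZ => hvZ ⟨e, heZ, hv⟩⟩, hv⟩
      obtain ⟨e₀, he₀⟩ := List.exists_mem_of_ne_nil esZ hcZ.2.1
      have hZne : ({e | e ∈ esZ} : Set E).Nonempty := ⟨e₀, he₀⟩
      have hZpos : 0 < ({e | e ∈ esZ} : Set E).ncard := Set.ncard_pos hZfin |>.mpr hZne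
      have hIcard : (I \ {e | e ∈ esZ}).ncard + ({e | e ∈ esZ} : Set E).ncard = I.ncard :=
        Set.ncard_diff_add_ncard_of_subset hZsub hfin
      have hvcard : (G.verts I \ G.verts {e | e ∈ esZ}).ncard +
          (G.verts {e | e ∈ esZ}).ncard = (G.verts I).ncard :=
        Set.ncard_diff_add_ncard_of_subset hvZsub hvfin
      have hZcard : ({e | e ∈ esZ} : Set E).ncard = esZ.length := list_ncard hcZ.2.2.1
      have hvZcard : (G.verts {e | e ∈ esZ}).ncard = esZ.length := by
        rw [cycle_verts_eq hcZ, list_ncard hcZ.2.2.2, ← walk_length hcZ.1.1]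
      have hIH : (I \ {e | e ∈ esZ}).ncard ≤ (G.verts (I \ {e | e ∈ esZ})).ncard := by
        refine ih (I \ {e | e ∈ esZ}).ncard ?_ _ le_rfl (hfin.diff)
          (bicircIndep_mono hBI Set.diff_subset)
        omega
      rw [hvert_eq] at hIH
      omega
    · push_neg at hiso
      obtain ⟨d, hdI, hdZ, x, hxinc, hxvZ⟩ := hiso
      exact absurd (bicirc_cycle_isolated hfin hBI hcZ hmin hdI hdZ hxinc hxvZ) id
  · push_neg at hmin
    obtain ⟨v, hvI, hdegv⟩ := hmin
    obtain ⟨e, heI, hve⟩ := hvI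
    have hA : e ∈ {e' ∈ I | v ∈ G.inc e'} := ⟨heI, hve⟩
    have hAfin : {e' ∈ I | v ∈ G.inc e'}.Finite := hfin.subset (Set.sep_subset _ _)
    have hApos : 0 < {e' ∈ I | v ∈ G.inc e'}.ncard := (Set.ncard_pos hAfin).mpr ⟨e, hA⟩
    have hdeg' : {e' ∈ I | v ∈ G.inc e'}.ncard + {e' ∈ I | G.inc e' = s(v,v)}.ncard ≤ 1 := by
      have : G.degree I v < 2 := by omega
      unfold Multigraph.degree at this
      omega
    have hAone : {e' ∈ I | v ∈ G.inc e'} = {e} := by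
      have h1 : {e' ∈ I | v ∈ G.inc e'}.ncard = 1 := by omega
      obtain ⟨a, ha⟩ := Set.ncard_eq_one.mp h1
      rw [ha] at hA ⊢
      rw [Set.mem_singleton_iff.mp hA]
    have hverts' : G.verts (I \ {e}) ⊆ G.verts I \ {v} := by
      rintro u ⟨e'', ⟨he''I, he''e⟩, hu⟩
      refine ⟨⟨e'', he''I, hu⟩, ?_⟩
      intro hc
      rw [Set.mem_singleton_iff] at hc
      have : e'' ∈ {e' ∈ I | v ∈ G.inc e'} := ⟨he''I, hc ▸ hu⟩
      rw [hAone] at this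
      exact he''e this
    have hIcard : (I \ {e}).ncard + 1 = I.ncard := by
      rw [Set.ncard_diff_singleton_of_mem heI]
      have : 0 < I.ncard := (Set.ncard_pos hfin).mpr ⟨e, heI⟩
      omega
    have hvfin : (G.verts I).Finite := verts_finite hfin
    have hvmem : v ∈ G.verts I := ⟨e, heI, hve⟩
    have hvcard : (G.verts I \ {v}).ncard + 1 = (G.verts I).ncard := by
      rw [Set.ncard_diff_singleton_of_mem hvmem]
      have : 0 < (G.verts I).ncard := (Set.ncard_pos hvfin).mpr ⟨v, hvmem⟩
      omega
    have hIH : (I \ {e}).ncard ≤ (G.verts (I \ {e})).ncard := by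
      refine ih (I \ {e}).ncard ?_ _ le_rfl (hfin.diff) (bicircIndep_mono hBI Set.diff_subset)
      omega
    have hle : (G.verts (I \ {e})).ncard ≤ (G.verts I \ {v}).ncard :=
      Set.ncard_le_ncard hverts' (hvfin.diff)
    omega

/-- A finite nonempty acyclic edge set has strictly fewer edges than vertices. -/
lemma acyclic_ncard_lt :
    ∀ n (I : Set E), I.ncard ≤ n → I.Finite → (∀ X, ¬ G.IsCycleIn I X) → I.Nonempty →
      I.ncard < (G.verts I).ncard := by
  intro n
  induction n using Nat.strong_induction_on with
  | _ n ih =>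
  intro I hn hfin hacyc hne
  have hnoloop : ∀ e ∈ I, ∀ x, G.inc e ≠ s(x, x) := by
    intro e he x hloop
    exact hacyc {e' | e' ∈ [e]} ⟨x, [e], [x], ⟨⟨IsWalk.cons he hloop (IsWalk.nil _), rfl⟩,
      by simp, by simp, by simp⟩, rfl⟩
  by_cases hmin : ∀ v ∈ G.verts I, 2 ≤ G.degree I v
  · obtain ⟨z₀, esZ, vsZ, hcZ⟩ := exists_cycle_of_min_degree hfin hne hmin
    exact absurd ⟨z₀, esZ, vsZ, hcZ, rfl⟩ (hacyc _)
  · push_neg at hmin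
    obtain ⟨v, hvI, hdegv⟩ := hmin
    obtain ⟨e, heI, hve⟩ := hvI
    have hA : e ∈ {e' ∈ I | v ∈ G.inc e'} := ⟨heI, hve⟩
    have hAfin : {e' ∈ I | v ∈ G.inc e'}.Finite := hfin.subset (Set.sep_subset _ _)
    have hApos : 0 < {e' ∈ I | v ∈ G.inc e'}.ncard := (Set.ncard_pos hAfin).mpr ⟨e, hA⟩
    have hdeg' : {e' ∈ I | v ∈ G.inc e'}.ncard + {e' ∈ I | G.inc e' = s(v,v)}.ncard ≤ 1 := by
      have : G.degree I v < 2 := by omega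
      unfold Multigraph.degree at this
      omega
    have hAone : {e' ∈ I | v ∈ G.inc e'} = {e} := by
      have h1 : {e' ∈ I | v ∈ G.inc e'}.ncard = 1 := by omega
      obtain ⟨a, ha⟩ := Set.ncard_eq_one.mp h1
      rw [ha] at hA ⊢
      rw [Set.mem_singleton_iff.mp hA]
    obtain ⟨b, hb⟩ := Sym2.mem_iff_exists.mp hve
    have hbv : b ≠ v := by
      rintro rfl
      exact hnoloop e heI b hb
    have hacyc' : ∀ X, ¬ G.IsCycleIn (I \ {e}) X := by
      intro X hX
      exact hacyc X (isCycleIn_mono hX Set.diff_subset)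
    have hvfin : (G.verts I).Finite := verts_finite hfin
    have hvmem : v ∈ G.verts I := ⟨e, heI, hve⟩
    by_cases hI' : I \ {e} = ∅
    · have hIe : I = {e} := by
        apply Set.eq_of_subset_of_subset
        · intro e' he'
          by_contra hc
          exact (Set.eq_empty_iff_forall_notMem.mp hI' e') ⟨he', hc⟩
        · simp [heI]
      have hverts : G.verts I = {v, b} := by
        rw [hIe]
        ext x
        constructor
        · rintro ⟨e', he', hx⟩
          rw [Set.mem_singleton_iff.mp he'] at hx
          rw [hb] at hx
          rcases Sym2.mem_iff.mp hx with rfl | rfl <;> simp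
        · rintro (rfl | rfl)
          · exact ⟨e, rfl, hve⟩
          · exact ⟨e, rfl, by rw [hb]; simp⟩
      rw [hverts, hIe]
      rw [Set.ncard_singleton, Set.ncard_pair (Ne.symm hbv)]
      omega
    · have hne' : (I \ {e}).Nonempty := Set.nonempty_iff_ne_empty.mpr hI'
      have hIcard : (I \ {e}).ncard + 1 = I.ncard := by
        rw [Set.ncard_diff_singleton_of_mem heI]
        have : 0 < I.ncard := (Set.ncard_pos hfin).mpr ⟨e, heI⟩
        omega
      have hverts' : G.verts (I \ {e}) ⊆ G.verts I \ {v} := by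
        rintro u ⟨e'', ⟨he''I, he''e⟩, hu⟩
        refine ⟨⟨e'', he''I, hu⟩, ?_⟩
        intro hc
        rw [Set.mem_singleton_iff] at hc
        have : e'' ∈ {e' ∈ I | v ∈ G.inc e'} := ⟨he''I, hc ▸ hu⟩
        rw [hAone] at this
        exact he''e this
      have hvcard : (G.verts I \ {v}).ncard + 1 = (G.verts I).ncard := by
        rw [Set.ncard_diff_singleton_of_mem hvmem]
        have : 0 < (G.verts I).ncard := (Set.ncard_pos hvfin).mpr ⟨v, hvmem⟩
        omega
      have hIH : (I \ {e}).ncard < (G.verts (I \ {e})).ncard := by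
        refine ih (I \ {e}).ncard ?_ _ le_rfl (hfin.diff) hacyc' hne'
        omega
      have hle : (G.verts (I \ {e})).ncard ≤ (G.verts I \ {v}).ncard :=
        Set.ncard_le_ncard hverts' (hvfin.diff)
      omega

/-- Handshake-type bound: if the min degree is `2` and `|D| ≤ |V(D)| + 2`, then
at most `4` vertices have degree at least `3`. -/
lemma deg3_count {D : Set E} (hD : D.Finite) (h2 : ∀ v ∈ G.verts D, 2 ≤ G.degree D v)
    (hle : D.ncard ≤ (G.verts D).ncard + 2) :
    {v ∈ G.verts D | 3 ≤ G.degree D v}.ncard ≤ 4 := by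
  classical
  have hVfin : (G.verts D).Finite := verts_finite hD
  set DF := hD.toFinset with hDF
  set VF := hVfin.toFinset with hVF
  have hdegF : ∀ v, G.degree D v =
      (DF.filter (fun e => v ∈ G.inc e)).card + (DF.filter (fun e => G.inc e = s(v,v))).card := by
    intro v
    unfold Multigraph.degree
    congr 1
    · have : {e ∈ D | v ∈ G.inc e} = ↑(DF.filter (fun e => v ∈ G.inc e)) := by
        ext x; simp [hDF]
      rw [this, Set.ncard_coe_finset]
    · have : {e ∈ D | G.inc e = s(v,v)} = ↑(DF.filter (fun e => G.inc e = s(v,v))) := by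
        ext x; simp [hDF]
      rw [this, Set.ncard_coe_finset]
  have hsum : ∑ v ∈ VF, G.degree D v = 2 * DF.card := by
    have h1 : ∑ v ∈ VF, (DF.filter (fun e => v ∈ G.inc e)).card =
        ∑ e ∈ DF, (VF.filter (fun v => v ∈ G.inc e)).card := by
      simp only [Finset.card_filter]
      rw [Finset.sum_comm]
    have h2' : ∑ v ∈ VF, (DF.filter (fun e => G.inc e = s(v,v))).card =
        ∑ e ∈ DF, (VF.filter (fun v => G.inc e = s(v,v))).card := by
      simp only [Finset.card_filter]
      rw [Finset.sum_comm]
    have hper : ∀ e ∈ DF, (VF.filter (fun v => v ∈ G.inc e)).card +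
        (VF.filter (fun v => G.inc e = s(v,v))).card = 2 := by
      intro e he
      have heD : e ∈ D := by simpa [hDF] using he
      obtain ⟨a, b, hab⟩ := inc_exists G e
      have haV : a ∈ VF := by
        simp only [hVF, Set.Finite.mem_toFinset]
        exact ⟨e, heD, by rw [hab]; simp⟩
      have hbV : b ∈ VF := by
        simp only [hVF, Set.Finite.mem_toFinset]
        exact ⟨e, heD, by rw [hab]; simp⟩
      by_cases hab' : a = b
      · have hf1 : VF.filter (fun v => v ∈ G.inc e) = {a} := by
          ext x
          simp only [Finset.mem_filter, Finset.mem_singleton]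
          constructor
          · rintro ⟨_, hx⟩
            rw [hab] at hx
            rcases Sym2.mem_iff.mp hx with rfl | rfl
            · rfl
            · exact hab'.symm
          · rintro rfl
            exact ⟨haV, by rw [hab]; simp⟩
        have hf2 : VF.filter (fun v => G.inc e = s(v,v)) = {a} := by
          ext x
          simp only [Finset.mem_filter, Finset.mem_singleton]
          constructor
          · rintro ⟨_, hx⟩
            rw [hab] at hx
            exact (sym2_loop_eq hx).1.symm
          · rintro rfl
            refine ⟨haV, ?_⟩
            rw [hab, hab']
        rw [hf1, hf2]
        simp
      · have hf1 : VF.filter (fun v => v ∈ G.inc e) = {a, b} := by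
          ext x
          simp only [Finset.mem_filter, Finset.mem_insert, Finset.mem_singleton, hab]
          constructor
          · rintro ⟨_, hx⟩
            rcases Sym2.mem_iff.mp hx with rfl | rfl
            · exact Or.inl rfl
            · exact Or.inr rfl
          · rintro (rfl | rfl)
            · exact ⟨haV, by simp⟩
            · exact ⟨hbV, by simp⟩
        have hf2 : VF.filter (fun v => G.inc e = s(v,v)) = ∅ := by
          ext x
          simp only [Finset.mem_filter, Finset.notMem_empty, iff_false, not_and, hab]
          intro _
          intro hx
          obtain ⟨h1, h2⟩ := sym2_loop_eq hx
          exact hab' (h1.trans h2.symm)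
        rw [hf1, hf2]
        rw [Finset.card_insert_of_notMem (by simpa using hab'), Finset.card_singleton]
        simp
    calc ∑ v ∈ VF, G.degree D v
        = ∑ e ∈ DF, ((VF.filter (fun v => v ∈ G.inc e)).card +
            (VF.filter (fun v => G.inc e = s(v,v))).card) := by
          simp only [hdegF]
          rw [Finset.sum_add_distrib, h1, h2', ← Finset.sum_add_distrib]
      _ = ∑ e ∈ DF, 2 := Finset.sum_congr rfl hper
      _ = 2 * DF.card := by rw [Finset.sum_const]; ring
  have hlower : 2 * VF.card + (VF.filter (fun v => 3 ≤ G.degree D v)).card ≤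
      ∑ v ∈ VF, G.degree D v := by
    calc 2 * VF.card + (VF.filter (fun v => 3 ≤ G.degree D v)).card
        = ∑ v ∈ VF, (2 + if 3 ≤ G.degree D v then 1 else 0) := by
          rw [Finset.sum_add_distrib, Finset.sum_const, ← Finset.card_filter, smul_eq_mul]
          ring
      _ ≤ ∑ v ∈ VF, G.degree D v := by
          refine Finset.sum_le_sum fun v hv => ?_
          have hvD : v ∈ G.verts D := by simpa [hVF] using hv
          by_cases h3 : 3 ≤ G.degree D v
          · simp [h3]
          · simp only [h3, if_false]; simpa using h2 v hvD
  have hDcard : DF.card = D.ncard := by rw [hDF, Set.ncard_eq_toFinset_card _ hD]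
  have hVcard : VF.card = (G.verts D).ncard := by rw [hVF, Set.ncard_eq_toFinset_card _ hVfin]
  have hset : {v ∈ G.verts D | 3 ≤ G.degree D v} = ↑(VF.filter (fun v => 3 ≤ G.degree D v)) := by
    ext x; simp [hVF]
  rw [hset, Set.ncard_coe_finset]
  omega

end Counting

section Plumbing

variable {M : Matroid E}

lemma circuit_ssubset_bicircIndep (hM : G.IsBicircularOf M) {C Y : Set E}
    (hC : Circuit M C) (hY : Y ⊂ C) : G.BicircIndep Y := by
  have hnd : ¬ M.Dep Y := hC.2 Y hY
  have hi : M.Indep Y := by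
    by_contra h
    exact hnd ⟨h, by rw [hM.1]; exact Set.subset_univ _⟩
  exact (hM.2 Y).mp hi

lemma circuit_not_bicircIndep (hM : G.IsBicircularOf M) {C : Set E}
    (hC : Circuit M C) : ¬ G.BicircIndep C :=
  fun h => hC.1.1 ((hM.2 C).mpr h)

lemma circuit_no_pendant_vertex (hM : G.IsBicircularOf M) {C : Set E}
    (hC : Circuit M C) {d : E} {v bv : V}
    (hdC : d ∈ C) (hd : G.inc d = s(bv, v)) (hbv : bv ≠ v)
    (Hv : ∀ e ∈ C, v ∈ G.inc e → e = d) : False := by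
  have h1 := not_bicircIndep_pendant hdC hd hbv Hv (circuit_not_bicircIndep hM hC)
  have hss : C \ {d} ⊂ C :=
    (Set.ssubset_iff_of_subset Set.diff_subset).mpr ⟨d, hdC, by simp⟩
  exact h1 (circuit_ssubset_bicircIndep hM hC hss)

lemma circuit_no_loop_vertex (hM : G.IsBicircularOf M) {C : Set E}
    (hC : Circuit M C) {d : E} {v : V}
    (hdC : d ∈ C) (hd : G.inc d = s(v, v))
    (Hv : ∀ e ∈ C, v ∈ G.inc e → e = d) : False := by
  have h1 := not_bicircIndep_loopvert hdC hd Hv (circuit_not_bicircIndep hM hC)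
  have hss : C \ {d} ⊂ C :=
    (Set.ssubset_iff_of_subset Set.diff_subset).mpr ⟨d, hdC, by simp⟩
  exact h1 (circuit_ssubset_bicircIndep hM hC hss)

end Plumbing

end Aux

/-- If the circuit partition of a double circuit `D` of `B(G)` has at
least `4` singular parts `{e₁}, {e₂}, {e₃}, {e₄}`, then the edges `e₁, e₂, e₃, e₄` span a
subgraph of `G` with at most `4` vertices, and `G` contains a cycle of length at most `4`. -/
theorem four_singular_parts_short_cycle {V E : Type*} (G : Multigraph V E)
    (M : Matroid E) (hM : Multigraph.IsBicircularOf G M) (D : Set E)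
    (hD : DoubleCircuit M D) {k : ℕ} (f : Fin k → Set E) (hf : CircuitPartition M D f)
    (i₁ i₂ i₃ i₄ : Fin k)
    (hij : i₁ ≠ i₂ ∧ i₁ ≠ i₃ ∧ i₁ ≠ i₄ ∧ i₂ ≠ i₃ ∧ i₂ ≠ i₄ ∧ i₃ ≠ i₄)
    (e₁ e₂ e₃ e₄ : E) (h₁ : f i₁ = {e₁}) (h₂ : f i₂ = {e₂}) (h₃ : f i₃ = {e₃})
    (h₄ : f i₄ = {e₄}) :
    (G.verts {e₁, e₂, e₃, e₄}).encard ≤ 4 ∧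
      ∃ C : Set E, G.IsCycleIn univ C ∧ C.encard ≤ 4 := by
  classical
  obtain ⟨hDE, hDfin, hrk, hrk'⟩ := hD
  obtain ⟨hfne, hdisj, hunion, hcirc⟩ := hf
  -- membership and distinctness facts
  have hmem : ∀ (i : Fin k) (x : E), f i = {x} → x ∈ D := by
    intro i x hx
    have hsub : f i ⊆ D := by
      rw [← hunion]; exact Set.subset_iUnion f i
    exact hsub (by rw [hx]; rfl)
  have he₁D : e₁ ∈ D := hmem i₁ e₁ h₁
  have he₂D : e₂ ∈ D := hmem i₂ e₂ h₂
  have he₃D : e₃ ∈ D := hmem i₃ e₃ h₃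
  have he₄D : e₄ ∈ D := hmem i₄ e₄ h₄
  have hdist : ∀ (i j : Fin k) (x y : E), i ≠ j → f i = {x} → f j = {y} → x ≠ y := by
    intro i j x y hij' hx hy
    have hd' := hdisj i j hij'
    rw [hx, hy] at hd'
    intro heq
    rw [heq] at hd'
    exact (Set.disjoint_left.mp hd' (Set.mem_singleton y)) (Set.mem_singleton y)
  have h12 : e₁ ≠ e₂ := hdist i₁ i₂ e₁ e₂ hij.1 h₁ h₂
  have h13 : e₁ ≠ e₃ := hdist i₁ i₃ e₁ e₃ hij.2.1 h₁ h₃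
  have h14 : e₁ ≠ e₄ := hdist i₁ i₄ e₁ e₄ hij.2.2.1 h₁ h₄
  have h23 : e₂ ≠ e₃ := hdist i₂ i₃ e₂ e₃ hij.2.2.2.1 h₂ h₃
  have h24 : e₂ ≠ e₄ := hdist i₂ i₄ e₂ e₄ hij.2.2.2.2.1 h₂ h₄
  have h34 : e₃ ≠ e₄ := hdist i₃ i₄ e₃ e₄ hij.2.2.2.2.2 h₃ h₄
  -- circuits obtained by deleting a singular edge
  have hsingle : ∀ (i : Fin k) (x : E), f i = {x} → Circuit M (D \ {x}) := by
    intro i x hx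
    have h := (hcirc (D \ f i)).mpr ⟨i, rfl⟩
    rw [hx] at h
    exact h.1
  have hC₁ := hsingle i₁ e₁ h₁
  have hC₂ := hsingle i₂ e₂ h₂
  -- minimum degree 2 in G[D]
  have hdeg2 : ∀ v ∈ G.verts D, 2 ≤ G.degree D v := by
    intro v hv
    by_contra hlt
    push_neg at hlt
    obtain ⟨e, heD, hve⟩ := hv
    have hA : e ∈ {e' ∈ D | v ∈ G.inc e'} := ⟨heD, hve⟩
    have hAfin : {e' ∈ D | v ∈ G.inc e'}.Finite := hDfin.subset (Set.sep_subset _ _)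
    have hBfin : {e' ∈ D | G.inc e' = s(v,v)}.Finite := hDfin.subset (Set.sep_subset _ _)
    have hApos : 0 < {e' ∈ D | v ∈ G.inc e'}.ncard := (Set.ncard_pos hAfin).mpr ⟨e, hA⟩
    have hdeg' : {e' ∈ D | v ∈ G.inc e'}.ncard + {e' ∈ D | G.inc e' = s(v,v)}.ncard < 2 := by
      unfold Multigraph.degree at hlt
      omega
    have hAone : {e' ∈ D | v ∈ G.inc e'} = {e} := by
      have h1 : {e' ∈ D | v ∈ G.inc e'}.ncard = 1 := by omega
      obtain ⟨a, ha⟩ := Set.ncard_eq_one.mp h1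
      rw [ha] at hA ⊢
      rw [Set.mem_singleton_iff.mp hA]
    have hBempty : {e' ∈ D | G.inc e' = s(v,v)} = ∅ := by
      have : {e' ∈ D | G.inc e' = s(v,v)}.ncard = 0 := by omega
      exact (Set.ncard_eq_zero hBfin).mp this
    obtain ⟨y, hy⟩ := Sym2.mem_iff_exists.mp hve
    have hyv : y ≠ v := by
      rintro rfl
      have : e ∈ {e' ∈ D | G.inc e' = s(y,y)} := ⟨heD, hy⟩
      rw [hBempty] at this
      exact this
    have hpick : ∃ x, Circuit M (D \ {x}) ∧ e ≠ x := by
      by_cases hee : e = e₁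
      · exact ⟨e₂, hC₂, by rw [hee]; exact h12⟩
      · exact ⟨e₁, hC₁, hee⟩
    obtain ⟨x, hCx, hex⟩ := hpick
    refine circuit_no_pendant_vertex hM hCx (d := e) ⟨heD, by simpa using hex⟩
      (hy.trans Sym2.eq_swap) hyv ?_
    intro e' he' hve'
    have : e' ∈ {e' ∈ D | v ∈ G.inc e'} := ⟨he'.1, hve'⟩
    rw [hAone] at this
    exact this
  -- degree at least 3 at endpoints of singular edges
  have hdeg3core : ∀ (j l : Fin k) (x y : E), f j = {x} → f l = {y} → x ≠ y →
      ∀ v ∈ G.inc x, 3 ≤ G.degree D v := by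
    intro j l x y hj hl hxy v hvx
    by_contra hlt
    push_neg at hlt
    have hxD' : x ∈ D := hmem j x hj
    have hA : x ∈ {e' ∈ D | v ∈ G.inc e'} := ⟨hxD', hvx⟩
    have hAfin : {e' ∈ D | v ∈ G.inc e'}.Finite := hDfin.subset (Set.sep_subset _ _)
    have hBfin : {e' ∈ D | G.inc e' = s(v,v)}.Finite := hDfin.subset (Set.sep_subset _ _)
    have hApos : 0 < {e' ∈ D | v ∈ G.inc e'}.ncard := (Set.ncard_pos hAfin).mpr ⟨x, hA⟩
    have hdeg' : {e' ∈ D | v ∈ G.inc e'}.ncard + {e' ∈ D | G.inc e' = s(v,v)}.ncard ≤ 2 := by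
      unfold Multigraph.degree at hlt
      omega
    have hCy : Circuit M (D \ {y}) := hsingle l y hl
    by_cases hBne : {e' ∈ D | G.inc e' = s(v,v)}.Nonempty
    · -- there is a loop at v; then x is that loop, the only edge at v
      obtain ⟨ℓ, hℓD, hℓ⟩ := hBne
      have hℓA : ℓ ∈ {e' ∈ D | v ∈ G.inc e'} := ⟨hℓD, by rw [hℓ]; simp⟩
      have hBpos : 0 < {e' ∈ D | G.inc e' = s(v,v)}.ncard :=
        (Set.ncard_pos hBfin).mpr ⟨ℓ, hℓD, hℓ⟩
      have hAone : {e' ∈ D | v ∈ G.inc e'} = {x} := by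
        have h1 : {e' ∈ D | v ∈ G.inc e'}.ncard = 1 := by omega
        obtain ⟨a, ha⟩ := Set.ncard_eq_one.mp h1
        rw [ha] at hA ⊢
        rw [Set.mem_singleton_iff.mp hA]
      have hxl : ℓ = x := by
        have := hℓA
        rw [hAone] at this
        exact this
      refine circuit_no_loop_vertex hM hCy (d := x) ⟨hxD', by simpa using hxy⟩
        (hxl ▸ hℓ) ?_
      intro e' he' hve'
      have : e' ∈ {e' ∈ D | v ∈ G.inc e'} := ⟨he'.1, hve'⟩
      rw [hAone] at this
      exact this
    · -- no loops at v
      have hBempty : {e' ∈ D | G.inc e' = s(v,v)} = ∅ :=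
        Set.not_nonempty_iff_eq_empty.mp hBne
      have hnoloop : ∀ e' ∈ D, v ∈ G.inc e' → ∃ b, G.inc e' = s(b, v) ∧ b ≠ v := by
        intro e' he' hve'
        obtain ⟨b, hb⟩ := Sym2.mem_iff_exists.mp hve'
        refine ⟨b, hb.trans Sym2.eq_swap, ?_⟩
        rintro rfl
        have : e' ∈ {e'' ∈ D | G.inc e'' = s(b,b)} := ⟨he', hb⟩
        rw [hBempty] at this
        exact this
      have hA12 : {e' ∈ D | v ∈ G.inc e'}.ncard = 1 ∨
          {e' ∈ D | v ∈ G.inc e'}.ncard = 2 := by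
        have : {e' ∈ D | G.inc e' = s(v,v)}.ncard = 0 := by
          rw [hBempty]; simp
        omega
      rcases hA12 with h1 | h2
      · -- x is the only edge at v, pendant in the circuit avoiding y
        have hAone : {e' ∈ D | v ∈ G.inc e'} = {x} := by
          obtain ⟨a, ha⟩ := Set.ncard_eq_one.mp h1
          rw [ha] at hA ⊢
          rw [Set.mem_singleton_iff.mp hA]
        obtain ⟨bx, hbx, hbxv⟩ := hnoloop x hxD' hvx
        refine circuit_no_pendant_vertex hM hCy (d := x) ⟨hxD', by simpa using hxy⟩
          hbx hbxv ?_
        intro e' he' hve'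
        have : e' ∈ {e' ∈ D | v ∈ G.inc e'} := ⟨he'.1, hve'⟩
        rw [hAone] at this
        exact this
      · -- two edges x, d at v; d is pendant in the circuit avoiding x
        have htail : ∀ d, d ∈ D → v ∈ G.inc d → d ≠ x →
            (∀ e' ∈ D, v ∈ G.inc e' → e' = x ∨ e' = d) → False := by
          intro d hdD hvd hdx hall
          obtain ⟨bd, hbd, hbdv⟩ := hnoloop d hdD hvd
          refine circuit_no_pendant_vertex hM (hsingle j x hj) (d := d)
            ⟨hdD, by simpa using hdx⟩ hbd hbdv ?_
          intro e' he' hve'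
          have hne' : e' ≠ x := by simpa using he'.2
          rcases hall e' he'.1 hve' with h' | h'
          · exact absurd h' hne'
          · exact h'
        obtain ⟨a, b, hab, hA2⟩ := Set.ncard_eq_two.mp h2
        have hxab : x = a ∨ x = b := by
          have := hA
          rw [hA2] at this
          simpa using this
        have haA : a ∈ {e' ∈ D | v ∈ G.inc e'} := by rw [hA2]; simp
        have hbA : b ∈ {e' ∈ D | v ∈ G.inc e'} := by rw [hA2]; simp
        have hallab : ∀ e' ∈ D, v ∈ G.inc e' → e' = a ∨ e' = b := by
          intro e' he' hve'
          have : e' ∈ {e' ∈ D | v ∈ G.inc e'} := ⟨he', hve'⟩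
          rw [hA2] at this
          simpa using this
        rcases hxab with rfl | rfl
        · exact htail b hbA.1 hbA.2 (fun h => hab h.symm)
            (fun e' he' hve' => hallab e' he' hve')
        · exact htail a haA.1 haA.2 (fun h => hab h)
            (fun e' he' hve' => (hallab e' he' hve').symm)
  have hdeg3 : ∀ v ∈ G.verts {e₁, e₂, e₃, e₄}, 3 ≤ G.degree D v := by
    rintro v ⟨e, heS, hve⟩
    rcases heS with rfl | rfl | rfl | rfl
    · exact hdeg3core i₁ i₂ e e₂ h₁ h₂ h12 v hve
    · exact hdeg3core i₂ i₁ e e₁ h₂ h₁ (Ne.symm h12) v hve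
    · exact hdeg3core i₃ i₁ e e₁ h₃ h₁ (Ne.symm h13) v hve
    · exact hdeg3core i₄ i₁ e e₁ h₄ h₁ (Ne.symm h14) v hve
  -- |D| ≤ |V(D)| + 2 via the independent set D \ {e₁, e₂}
  have hssub : D \ {e₁, e₂} ⊂ D \ {e₁} := by
    refine (Set.ssubset_iff_of_subset ?_).mpr ⟨e₂, ⟨he₂D, by simpa using Ne.symm h12⟩, ?_⟩
    · intro x hx
      exact ⟨hx.1, fun hc => hx.2 (Or.inl hc)⟩
    · simp
  have hJBI : G.BicircIndep (D \ {e₁, e₂}) := circuit_ssubset_bicircIndep hM hC₁ hssub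
  have hvfinD : (G.verts D).Finite := verts_finite hDfin
  have hDcard : D.ncard ≤ (G.verts D).ncard + 2 := by
    have hsub12 : ({e₁, e₂} : Set E) ⊆ D := by
      intro x hx
      rcases hx with rfl | rfl
      · exact he₁D
      · exact he₂D
    have h2card : ({e₁, e₂} : Set E).ncard = 2 := Set.ncard_pair h12
    have hdiff : (D \ {e₁, e₂}).ncard + ({e₁, e₂} : Set E).ncard = D.ncard :=
      Set.ncard_diff_add_ncard_of_subset hsub12 hDfin
    have hb := bicircIndep_ncard_le (D \ {e₁, e₂}).ncard _ le_rfl (hDfin.diff) hJBI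
    have hvle : (G.verts (D \ {e₁, e₂})).ncard ≤ (G.verts D).ncard :=
      Set.ncard_le_ncard (verts_mono Set.diff_subset) hvfinD
    omega
  have hW := deg3_count hDfin hdeg2 hDcard
  -- the four edges span at most 4 vertices
  have hS4D : ({e₁, e₂, e₃, e₄} : Set E) ⊆ D := by
    intro x hx
    rcases hx with rfl | rfl | rfl | rfl
    · exact he₁D
    · exact he₂D
    · exact he₃D
    · exact he₄D
  have hsubW : G.verts {e₁, e₂, e₃, e₄} ⊆ {v ∈ G.verts D | 3 ≤ G.degree D v} :=
    fun v hv => ⟨verts_mono hS4D hv, hdeg3 v hv⟩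
  have hWfin : {v ∈ G.verts D | 3 ≤ G.degree D v}.Finite :=
    hvfinD.subset (Set.sep_subset _ _)
  have hS4fin : ({e₁, e₂, e₃, e₄} : Set E).Finite := hDfin.subset hS4D
  have hvS4fin : (G.verts {e₁, e₂, e₃, e₄}).Finite := verts_finite hS4fin
  have hvS4 : (G.verts {e₁, e₂, e₃, e₄}).ncard ≤ 4 :=
    le_trans (Set.ncard_le_ncard hsubW hWfin) hW
  have hS4card : ({e₁, e₂, e₃, e₄} : Set E).ncard = 4 := by
    rw [Set.ncard_insert_of_notMem (by simp [h12, h13, h14])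
        ((hDfin.subset hS4D).subset (by intro x hx; simp at hx ⊢; tauto)),
      Set.ncard_insert_of_notMem (by simp [h23, h24])
        ((hDfin.subset hS4D).subset (by intro x hx; simp at hx ⊢; tauto)),
      Set.ncard_insert_of_notMem (by simp [h34]) (Set.finite_singleton _),
      Set.ncard_singleton]
  constructor
  · rw [hvS4fin.encard_eq_coe_toFinset_card, Set.ncard_eq_toFinset_card _ hvS4fin] at *
    exact_mod_cast hvS4
  · have hcyc : ∃ X, G.IsCycleIn {e₁, e₂, e₃, e₄} X := by
      by_contra h
      push_neg at h
      have := acyclic_ncard_lt ({e₁, e₂, e₃, e₄} : Set E).ncard _ le_rfl hS4fin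
        (fun X => h X) ⟨e₁, by simp⟩
      omega
    obtain ⟨X, hX⟩ := hcyc
    refine ⟨X, isCycleIn_mono hX (Set.subset_univ _), ?_⟩
    have hXsub : X ⊆ {e₁, e₂, e₃, e₄} := isCycleIn_subset hX
    have hXfin : X.Finite := hS4fin.subset hXsub
    have hXcard : X.ncard ≤ 4 := by
      rw [← hS4card]
      exact Set.ncard_le_ncard hXsub hS4fin
    rw [hXfin.encard_eq_coe_toFinset_card, Set.ncard_eq_toFinset_card _ hXfin] at *
    exact_mod_cast hXcard

end Paper
end

section
/- For a graph G in which every component of G[D] contains a cycle for a given edge set D, contracting in B(G) an element e of D that corresponds to a subdivided edge (an edge with an endpoint of degree 2 in G[D]) yields a double circuit D \ {e} of B(G)/e of the same degree as D, whenever D is a double circuit of B(G) of rank at least 1. -/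
open Set

namespace Paper

/-! ### Matroid notions -/

variable {α : Type*}

namespace Multigraph

lemma getLastD_append_cons {α : Type*} : ∀ (t : List α) (a : α) (l : List α) (d : α),
    (t ++ a :: l).getLastD d = l.getLastD a
  | [], a, l, d => by rw [List.nil_append, List.getLastD_cons]
  | c :: t, a, l, d => by
    rw [List.cons_append, List.getLastD_cons, getLastD_append_cons t a l c]

lemma getLastD_of_suffix {α : Type*} {l₁ l₂ : List α} {a b : α}
    (h : (a :: l₁) <:+ (b :: l₂)) : l₁.getLastD a = l₂.getLastD b := by
  obtain ⟨t, ht⟩ := h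
  cases t with
  | nil => simp only [List.nil_append, List.cons.injEq] at ht; rw [ht.1, ht.2]
  | cons c t =>
    simp only [List.cons_append, List.cons.injEq] at ht
    rw [← ht.2, getLastD_append_cons]

lemma getLast_cons_eq_getLastD {α : Type*} (a : α) (l : List α) :
    (a :: l).getLast (by simp) = l.getLastD a :=
  List.getLast_eq_getLastD _

variable {V E : Type*} {G : Multigraph V E} {I J : Set E} {u v w x y : V}
  {es : List E} {vs : List V} {e f g : E}

lemma IsWalk.edges_mem (h : G.IsWalk I u es vs) : ∀ f ∈ es, f ∈ I := by
  induction h with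
  | nil => simp
  | cons hf _ _ ih =>
    intro f hf'
    rcases List.mem_cons.1 hf' with rfl | hf'
    · exact hf
    · exact ih f hf'

lemma IsWalk.mono (h : G.IsWalk I u es vs) (hJ : ∀ f ∈ es, f ∈ J) :
    G.IsWalk J u es vs := by
  induction h with
  | nil v => exact .nil v
  | cons hf hinc _ ih =>
    exact .cons (hJ _ (List.mem_cons_self)) hinc (ih fun f hf => hJ f (List.mem_cons_of_mem _ hf))

lemma IsWalk.eq_nil (h : G.IsWalk I u [] vs) : vs = [] := by
  cases h; rfl

lemma IsWalk.length_eq (h : G.IsWalk I u es vs) : es.length = vs.length := by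
  induction h with
  | nil => rfl
  | cons _ _ _ ih => simpa using ih

lemma IsWalk.vertex_mem (h : G.IsWalk I u es vs) (hf : f ∈ es) (hx : x ∈ G.inc f) :
    x ∈ u :: vs := by
  induction h with
  | nil => simp at hf
  | cons hf' hinc hw ih =>
    rcases List.mem_cons.1 hf with rfl | hf
    · rw [hinc, Sym2.mem_iff] at hx
      rcases hx with rfl | rfl
      · exact List.mem_cons_self
      · exact List.mem_cons_of_mem _ (List.mem_cons_self)
    · exact List.mem_cons_of_mem _ (ih hf)

lemma IsWalk.last_edge (h : G.IsWalk I u es vs) (hne : es ≠ []) :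
    ∃ pre f, es = pre ++ [f] ∧ vs.getLastD u ∈ G.inc f := by
  induction h with
  | nil => simp at hne
  | @cons u v e es vs hf hinc hw ih =>
    rcases eq_or_ne es [] with rfl | hes
    · have hvs : vs = [] := hw.eq_nil
      subst hvs
      exact ⟨[], e, rfl, by rw [List.getLastD_cons, List.getLastD_nil, hinc]; simp⟩
    · obtain ⟨pre, f, rfl, hlast⟩ := ih hes
      exact ⟨e :: pre, f, rfl, by rwa [List.getLastD_cons]⟩

/-- An interior vertex of a walk has two consecutive incident edges. -/
lemma IsWalk.interior (h : G.IsWalk I u es vs) (hx : x ∈ vs)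
    (hlast : x ≠ vs.getLastD u) :
    ∃ pre f₁ f₂ post, es = pre ++ f₁ :: f₂ :: post ∧ x ∈ G.inc f₁ ∧ x ∈ G.inc f₂ := by
  induction h with
  | nil => simp at hx
  | @cons u v e es vs hf hinc hw ih =>
    rw [List.getLastD_cons] at hlast
    rcases List.mem_cons.1 hx with rfl | hx'
    · rcases eq_or_ne vs [] with rfl | hvs
      · rw [List.getLastD_nil] at hlast
        exact absurd rfl hlast
      · cases hw with
        | nil => simp at hvs
        | @cons _ y f₂ es' vs' hf₂ hinc₂ hw₂ =>
          exact ⟨[], e, f₂, es', rfl, by simp [hinc], by simp [hinc₂]⟩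
    · obtain ⟨pre, f₁, f₂, post, rfl, h1, h2⟩ := ih hx' hlast
      exact ⟨e :: pre, f₁, f₂, post, rfl, h1, h2⟩

/-- Interior vertex of a walk with no repeated vertices: two *distinct* incident edges. -/
lemma IsWalk.interior' (h : G.IsWalk I u es vs) (hnd : (u :: vs).Nodup) (hx : x ∈ vs)
    (hlast : x ≠ vs.getLastD u) :
    ∃ f₁ ∈ es, ∃ f₂ ∈ es, f₁ ≠ f₂ ∧ x ∈ G.inc f₁ ∧ x ∈ G.inc f₂ := by
  induction h with
  | nil => simp at hx
  | @cons u v e es vs hf hinc hw ih =>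
    rw [List.getLastD_cons] at hlast
    rcases List.mem_cons.1 hx with rfl | hx'
    · rcases eq_or_ne vs [] with rfl | hvs
      · rw [List.getLastD_nil] at hlast
        exact absurd rfl hlast
      · cases hw with
        | nil => simp at hvs
        | @cons _ y f₂ es' vs' hf₂ hinc₂ hw₂ =>
          refine ⟨e, List.mem_cons_self, f₂, List.mem_cons_of_mem _ (List.mem_cons_self),
            ?_, by simp [hinc], by simp [hinc₂]⟩
          rintro rfl
          have hu : u ∈ G.inc e := by rw [hinc]; exact Sym2.mem_mk_left _ _
          rw [hinc₂, Sym2.mem_iff] at hu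
          have : u ∈ x :: y :: vs' := by
            rcases hu with rfl | rfl
            · exact List.mem_cons_self
            · exact List.mem_cons_of_mem _ (List.mem_cons_self)
          exact (List.nodup_cons.1 hnd).1 this
    · obtain ⟨f₁, h₁, f₂, h₂, hne, hx₁, hx₂⟩ := ih hnd.of_cons hx' hlast
      exact ⟨f₁, List.mem_cons_of_mem _ h₁, f₂, List.mem_cons_of_mem _ h₂, hne, hx₁, hx₂⟩

lemma IsWalk.suffix (h : G.IsWalk I u es vs) (hx : x ∈ u :: vs) :
    ∃ es' vs', G.IsWalk I x es' vs' ∧ (x :: vs') <:+ (u :: vs) := by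
  induction h with
  | nil v =>
    simp only [List.mem_singleton] at hx
    subst hx
    exact ⟨[], [], .nil x, List.suffix_refl _⟩
  | @cons u v e es vs hf hinc hw ih =>
    rcases List.mem_cons.1 hx with rfl | hx'
    · exact ⟨e :: es, v :: vs, .cons hf hinc hw, List.suffix_refl _⟩
    · obtain ⟨es', vs', hw', hsuf⟩ := ih hx'
      exact ⟨es', vs', hw', hsuf.trans (List.suffix_cons _ _)⟩

lemma IsWalk.to_path (h : G.IsWalk I u es vs) :
    ∃ es' vs', G.IsWalk I u es' vs' ∧ (u :: vs').Nodup ∧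
      vs'.getLastD u = vs.getLastD u := by
  induction h with
  | nil v => exact ⟨[], [], .nil v, by simp, rfl⟩
  | @cons u v e es vs hf hinc hw ih =>
    obtain ⟨es', vs', hw', hnd, hlast⟩ := ih
    rw [List.getLastD_cons]
    by_cases hu : u ∈ v :: vs'
    · obtain ⟨es'', vs'', hw'', hsuf⟩ := hw'.suffix hu
      refine ⟨es'', vs'', hw'', hnd.sublist hsuf.sublist, ?_⟩
      rw [getLastD_of_suffix hsuf, hlast]
    · refine ⟨e :: es', v :: vs', .cons hf hinc hw', by simp [hnd, hu], ?_⟩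
      rw [List.getLastD_cons, hlast]

end Multigraph

namespace Multigraph

variable {V E : Type*} {G : Multigraph V E} {I J : Set E} {u v w x y : V}
  {es : List E} {vs : List V} {e f g : E}

/-- If every edge of `I` at `x` is a loop at `x`, a walk starting at `x` stays at `x`. -/
lemma IsWalk.stay (h : G.IsWalk I u es vs)
    (hst : ∀ f ∈ I, x ∈ G.inc f → G.inc f = s(x, x)) :
    u = x → ∀ y ∈ vs, y = x := by
  induction h with
  | nil => simp
  | @cons u v e es vs hf hinc hw ih =>
    intro hux z hz
    have hxe : x ∈ G.inc e := by rw [hinc, ← hux]; exact Sym2.mem_mk_left _ _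
    have hvx : v = x := by
      have h2 := hst e hf hxe
      rw [h2] at hinc
      rw [Sym2.eq_iff] at hinc
      rcases hinc with ⟨h3, h4⟩ | ⟨h3, h4⟩
      · exact h4.symm
      · exact h3.symm
    rcases List.mem_cons.1 hz with rfl | hz'
    · exact hvx
    · exact ih hvx z hz'

/-- If the only edge of `I` at `x` is the loop `e`, a walk starting away from `x`
avoids `x` and `e`. -/
lemma IsWalk.avoid (h : G.IsWalk I u es vs)
    (honly : ∀ f ∈ I, x ∈ G.inc f → f = e) (hloop : G.inc e = s(x, x)) :
    u ≠ x → (∀ y ∈ vs, y ≠ x) ∧ ∀ f ∈ es, f ≠ e := by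
  induction h with
  | nil => simp
  | @cons u v e' es vs hf hinc hw ih =>
    intro hu
    have he' : e' ≠ e := by
      rintro rfl
      rw [hloop] at hinc
      rw [Sym2.eq_iff] at hinc
      rcases hinc with ⟨h1, h2⟩ | ⟨h1, h2⟩
      · exact hu h1.symm
      · exact hu h2.symm
    have hv : v ≠ x := by
      rintro rfl
      exact he' (honly e' hf (by rw [hinc]; exact Sym2.mem_mk_right _ _))
    obtain ⟨h1, h2⟩ := ih hv
    constructor
    · intro z hz
      rcases List.mem_cons.1 hz with rfl | hz'
      · exact hv
      · exact h1 z hz'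
    · intro f hf'
      rcases List.mem_cons.1 hf' with rfl | hf'
      · exact he'
      · exact h2 f hf'

/-- In a walk with no repeated vertices, a loop edge must be the first edge, based at the
start vertex. -/
lemma IsWalk.loop_first (h : G.IsWalk I u es vs) (hloop : G.inc f = s(x, x)) :
    vs.Nodup → f ∈ es → u = x ∧ ∃ tl, es = f :: tl := by
  induction h with
  | nil => simp
  | @cons u v e es vs hf hinc hw ih =>
    intro hnd hfm
    rcases List.mem_cons.1 hfm with rfl | hf'
    · rw [hloop] at hinc
      rw [Sym2.eq_iff] at hinc
      rcases hinc with ⟨h1, h2⟩ | ⟨h1, h2⟩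
      · exact ⟨h1.symm, _, rfl⟩
      · exact ⟨h2.symm, _, rfl⟩
    · obtain ⟨hvx, tl, rfl⟩ := ih (List.nodup_cons.1 hnd).2 hf'
      subst hvx
      cases hw with
      | @cons _ z _ es' vs' hf₂ hinc₂ hw₂ =>
        have hz : z = v := by
          rw [hloop] at hinc₂
          rw [Sym2.eq_iff] at hinc₂
          rcases hinc₂ with ⟨h1, h2⟩ | ⟨h1, h2⟩
          · exact h2.symm
          · exact h1.symm
        subst hz
        exact absurd (List.mem_cons_self) (List.nodup_cons.1 hnd).1

/-- A cycle through a loop edge `e` at `x` consists of `e` alone, provided `e` is the only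
edge of `I` at `x`. -/
lemma IsCycle.loop_eq (hc : G.IsCycle I v es vs)
    (honly : ∀ f ∈ I, x ∈ G.inc f → f = e) (hloop : G.inc e = s(x, x)) (he : e ∈ es) :
    es = [e] := by
  obtain ⟨⟨hw, hclosed⟩, hne, hndes, hndvs⟩ := hc
  obtain ⟨hvx, tl, rfl⟩ := hw.loop_first hloop hndvs he
  subst hvx
  cases hw with
  | @cons _ z _ es' vs' hf₂ hinc₂ hw₂ =>
    have hz : z = v := by
      rw [hloop] at hinc₂
      rw [Sym2.eq_iff] at hinc₂
      rcases hinc₂ with ⟨h1, h2⟩ | ⟨h1, h2⟩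
      · exact h2.symm
      · exact h1.symm
    subst hz
    cases hw₂ with
    | nil => rfl
    | @cons _ z₂ f₂ es₂ vs₂ hf₃ hinc₃ hw₃ =>
      have hfe : f₂ = e := honly f₂ hf₃ (by
        rw [hinc₃]; exact Sym2.mem_mk_left _ _)
      subst hfe
      exact absurd (List.mem_cons_self) (List.nodup_cons.1 hndes).1

/-- If the only edge of `I` at `x` is `g`, and `g` is not a loop at `x`, then no cycle
of `I` passes through `x`. -/
lemma IsCycle.avoid_vertex (hc : G.IsCycle I v es vs)
    (honly : ∀ f ∈ I, x ∈ G.inc f → f = g) (hgl : G.inc g ≠ s(x, x)) :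
    x ∉ v :: vs := by
  intro hmem
  obtain ⟨⟨hw, hclosed⟩, hne, hndes, hndvs⟩ := hc
  rw [getLast_cons_eq_getLastD] at hclosed
  by_cases hxv : x = v
  · subst hxv
    obtain ⟨pre, f₂, hdecomp, hlast⟩ := hw.last_edge hne
    rw [hclosed] at hlast
    have hf₂ : f₂ = g := honly f₂ (hw.edges_mem f₂ (hdecomp ▸ by simp)) hlast
    cases hw with
    | nil => exact hne rfl
    | @cons _ z f₁ es' vs' hf₁ hinc₁ hw₁ =>
      have hf₁g : f₁ = g :=
        honly f₁ hf₁ (by rw [hinc₁]; exact Sym2.mem_mk_left _ _)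
      cases pre with
      | nil =>
        simp only [List.nil_append, List.cons.injEq] at hdecomp
        obtain ⟨rfl, rfl⟩ := hdecomp
        have hvs' : vs' = [] := hw₁.eq_nil
        subst hvs'
        rw [List.getLastD_cons, List.getLastD_nil] at hclosed
        subst hclosed
        exact hgl (hf₁g ▸ hinc₁)
      | cons p pre' =>
        simp only [List.cons_append, List.cons.injEq] at hdecomp
        obtain ⟨rfl, rfl⟩ := hdecomp
        have hgmem : g ∈ pre' ++ [f₂] := by rw [hf₂]; simp
        have hnm : f₁ ∉ pre' ++ [f₂] := (List.nodup_cons.1 hndes).1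
        rw [hf₁g] at hnm
        exact hnm hgmem
  · have hx' : x ∈ vs := (List.mem_cons.1 hmem).resolve_left hxv
    obtain ⟨pre, f₁, f₂, post, hdecomp, h1, h2⟩ :=
      hw.interior hx' (by rw [hclosed]; exact hxv)
    have hf₁ : f₁ = g := honly f₁ (hw.edges_mem f₁ (hdecomp ▸ by simp)) h1
    have hf₂ : f₂ = g := honly f₂ (hw.edges_mem f₂ (hdecomp ▸ by simp)) h2
    rw [hdecomp, hf₁, hf₂] at hndes
    simp [List.nodup_append] at hndes

end Multigraph

section MatroidLemmas

variable {α : Type*} {M : Matroid α} {I J X Y C D : Set α} {e x d : α}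

lemma basis_encard_eq (h1 : M.IsBasis I X) (h2 : M.IsBasis J X) : I.encard = J.encard := by
  have b1 : (M.restrict X).IsBase I := (Matroid.isBase_restrict_iff h1.subset_ground).2 h1
  have b2 : (M.restrict X).IsBase J := (Matroid.isBase_restrict_iff h2.subset_ground).2 h2
  exact b1.encard_eq_encard_of_isBase b2

lemma encard_le_eRk (hI : M.Indep I) (hIX : I ⊆ X) : I.encard ≤ eRk M X :=
  le_iSup₂_of_le I ⟨hI, hIX⟩ le_rfl

lemma basis_eRk_eq (h : M.IsBasis I X) : eRk M X = I.encard := by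
  refine le_antisymm (iSup₂_le fun J hJ => ?_) (encard_le_eRk h.indep h.subset)
  obtain ⟨I₂, hI₂, hJI₂⟩ := hJ.1.subset_isBasis_of_subset hJ.2 h.subset_ground
  rw [basis_encard_eq h hI₂]
  exact Set.encard_le_encard hJI₂

lemma eRk_le_encard (X : Set α) : eRk M X ≤ X.encard :=
  iSup₂_le fun J hJ => Set.encard_le_encard hJ.2

lemma eRk_ne_top (hX : X.Finite) : eRk M X ≠ ⊤ :=
  ((eRk_le_encard X).trans_lt hX.encard_lt_top).ne

lemma indep_eRk_eq (hI : M.Indep I) : eRk M I = I.encard :=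
  basis_eRk_eq hI.isBasis_self

/-- Every finite dependent set contains a circuit. -/
lemma exists_circuit_subset (hX : M.Dep X) (hfin : X.Finite) :
    ∃ C, C ⊆ X ∧ Circuit M C := by
  have hS : {S | S ⊆ X ∧ M.Dep S}.Finite :=
    hfin.finite_subsets.subset fun S hS => hS.1
  obtain ⟨C, hC⟩ := hS.exists_minimal ⟨X, Set.Subset.rfl, hX⟩
  refine ⟨C, hC.prop.1, hC.prop.2, fun S hS hSdep => ?_⟩
  exact hS.ne (hC.eq_of_subset ⟨hS.subset.trans hC.prop.1, hSdep⟩ hS.subset)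

lemma circuit_diff_singleton_indep (hC : Circuit M C) (hx : x ∈ C) : M.Indep (C \ {x}) := by
  by_contra hcon
  exact hC.2 _ (Set.sdiff_singleton_ssubset.2 hx)
    ⟨hcon, Set.diff_subset.trans hC.1.subset_ground⟩

lemma dep_eRk_add_one_le (hC : M.Dep C) (hfin : C.Finite) :
    eRk M C + 1 ≤ C.encard := by
  obtain ⟨I, hI⟩ := M.exists_isBasis C hC.subset_ground
  rw [basis_eRk_eq hI]
  have hne : I ≠ C := fun h => hC.not_indep (h ▸ hI.indep)
  have hlt : I.encard < C.encard := (hfin.subset hI.subset).encard_lt_encard (Set.ssubset_iff_subset_ne.2 ⟨hI.subset, hne⟩)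
  have hne' : I.encard ≠ ⊤ := ((hfin.subset hI.subset).encard_lt_top).ne
  exact (ENat.add_one_le_iff hne').2 hlt

/-- Removing an element of a circuit contained in `X` does not change the rank of `X`. -/
lemma eRk_diff_singleton_of_circuit (hC : Circuit M C) (hx : x ∈ C) (hCX : C ⊆ X)
    (hXE : X ⊆ M.E) : eRk M (X \ {x}) = eRk M X := by
  have hCi : M.Indep (C \ {x}) := circuit_diff_singleton_indep hC hx
  obtain ⟨J, hJ, hCJ⟩ := hCi.subset_isBasis_of_subset
    (Set.diff_subset_diff_left hCX) (Set.diff_subset.trans hXE)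
  have hJX : M.IsBasis J X := by
    refine hJ.indep.isBasis_of_forall_insert (hJ.subset.trans Set.diff_subset) fun y hy => ?_
    rcases eq_or_ne y x with rfl | hyx
    · refine hC.1.superset (fun c hc => ?_) ?_
      · rcases eq_or_ne c y with rfl | hcy
        · exact Set.mem_insert _ _
        · exact Set.mem_insert_of_mem _ (hCJ ⟨hc, hcy⟩)
      · exact Set.insert_subset (hXE (hCX hx)) (hJ.subset.trans (Set.diff_subset.trans hXE))
    · exact hJ.insert_dep ⟨⟨hy.1, hyx⟩, hy.2⟩
  rw [basis_eRk_eq hJ, basis_eRk_eq hJX]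

lemma eRk_le_eRk_add_encard_diff (hXY : X ⊆ Y) (hYE : Y ⊆ M.E) :
    eRk M Y ≤ eRk M X + (Y \ X).encard := by
  obtain ⟨I, hI⟩ := M.exists_isBasis X (hXY.trans hYE)
  obtain ⟨J, hJ, hIJ⟩ := hI.exists_isBasis_inter_eq_of_superset hXY
  rw [basis_eRk_eq hI, basis_eRk_eq hJ]
  have hsub : J ⊆ I ∪ (Y \ X) := by
    intro z hz
    by_cases hzX : z ∈ X
    · exact Or.inl (hIJ ▸ ⟨hz, hzX⟩)
    · exact Or.inr ⟨hJ.subset hz, hzX⟩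
  calc J.encard ≤ (I ∪ (Y \ X)).encard := Set.encard_le_encard hsub
    _ ≤ I.encard + (Y \ X).encard := Set.encard_union_le _ _

end MatroidLemmas

section ContractLemmas

variable {α : Type*} {M : Matroid α} {I X : Set α} {e : α}

lemma contract_ground_eq : (contract M {e}).E = M.E \ {e} := rfl

lemma contract_indep_iff (hE : M.E = Set.univ) (he : M.Indep {e}) :
    (contract M {e}).Indep I ↔ e ∉ I ∧ M.Indep (insert e I) := by
  have hXE : M✶.E \ {e} ⊆ M✶.E := Set.diff_subset
  constructor
  · rintro hI
    obtain ⟨hIsub, B, hB, hdisj⟩ := Matroid.dual_indep_iff_exists'.1 hI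
    simp only [delete] at hB
    rw [Matroid.isBase_restrict_iff hXE] at hB
    -- B is in fact a base of M✶
    have hBbase : M✶.IsBase B := by
      by_contra hcon
      obtain ⟨B', hB', hBB'⟩ := hB.indep.exists_isBase_superset
      have hB'sub : B' ⊆ insert e B := by
        intro z hz
        rcases eq_or_ne z e with rfl | hze
        · exact Set.mem_insert _ _
        · exact Set.mem_insert_of_mem _ (hB.mem_of_insert_indep
            ⟨hB'.subset_ground hz, hze⟩ (hB'.indep.subset (Set.insert_subset hz hBB')))
      have heB' : e ∈ B' := by
        by_contra heB'
        refine hcon ?_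
        have : B' = B := Set.Subset.antisymm
          (fun z hz => ((hB'sub hz).resolve_left (fun h => heB' (h ▸ hz)))) hBB'
        exact this ▸ hB'
      obtain ⟨D₀, hD₀, heD₀⟩ := he.exists_isBase_superset
      have hcompl : M✶.IsBase (M.E \ D₀) := hD₀.compl_isBase_dual
      have heB : e ∈ B' \ (M.E \ D₀) := ⟨heB', fun h => h.2 (heD₀ rfl)⟩
      obtain ⟨y, hy, hBy⟩ := hB'.exchange hcompl heB
      have hyB : y ∉ B := fun h => hy.2 (hBB' h)
      have hye : y ≠ e := fun h => (h ▸ hy.1).2 (heD₀ rfl)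
      have hBeB : B' \ {e} = B := by
        apply Set.Subset.antisymm
        · intro z hz
          exact (hB'sub hz.1).resolve_left hz.2
        · intro z hz
          exact ⟨hBB' hz, fun h => (h ▸ hB.subset hz :
            e ∈ M.E \ {e}).2 rfl⟩
      rw [hBeB] at hBy
      exact hyB (hB.mem_of_insert_indep ⟨hy.1.1, hye⟩ hBy.indep)
    have hMbase : M.IsBase (M.E \ B) := hBbase.compl_isBase_of_dual
    have hsub : insert e I ⊆ M.E \ B := by
      refine Set.insert_subset ⟨hE ▸ Set.mem_univ e, fun h => (hB.subset h).2 rfl⟩ ?_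
      intro z hz
      exact ⟨hE ▸ Set.mem_univ z, fun h => hdisj.ne_of_mem hz h rfl⟩
    exact ⟨fun h => (hIsub h).2 rfl, hMbase.indep.subset hsub⟩
  · rintro ⟨heI, hind⟩
    obtain ⟨B₀, hB₀, hIB₀⟩ := hind.exists_isBase_superset
    refine Matroid.dual_indep_iff_exists'.2 ⟨?_, M.E \ B₀, ?_, ?_⟩
    · intro z hz
      exact ⟨hE ▸ Set.mem_univ z, fun h => heI (h ▸ hz)⟩
    · simp only [delete]
      rw [Matroid.isBase_restrict_iff hXE]
      have hbd : M✶.IsBase (M.E \ B₀) := hB₀.compl_isBase_dual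
      refine hbd.indep.isBasis_of_forall_insert ?_ fun z hz => hbd.insert_dep ⟨hz.1.1, hz.2⟩
      intro z hz
      exact ⟨hz.1, fun h => hz.2 (h ▸ hIB₀ (Set.mem_insert _ _))⟩
    · exact Set.disjoint_left.2 fun z hz h => h.2 (hIB₀ (Set.mem_insert_of_mem _ hz))

lemma contract_eRk_add_one (hE : M.E = Set.univ) (he : M.Indep {e}) (heX : e ∉ X) :
    eRk (contract M {e}) X + 1 = eRk M (insert e X) := by
  obtain ⟨J, hJ, heJ⟩ := he.subset_isBasis_of_subset
    (Set.singleton_subset_iff.2 (Set.mem_insert _ _)) (hE ▸ Set.subset_univ _)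
  have heJ' : e ∈ J := heJ rfl
  have hNb : (contract M {e}).IsBasis (J \ {e}) X := by
    have hNi : (contract M {e}).Indep (J \ {e}) := by
      rw [contract_indep_iff hE he]
      refine ⟨fun h => h.2 rfl, ?_⟩
      rw [Set.insert_diff_singleton, Set.insert_eq_self.2 heJ']
      exact hJ.indep
    refine hNi.isBasis_of_forall_insert (fun z hz => ((hJ.subset hz.1).resolve_left hz.2)) ?_
    intro z hz
    have hze : z ≠ e := fun h => heX (h ▸ hz.1)
    have hzJ : z ∉ J := fun h => hz.2 ⟨h, hze⟩
    constructor
    · rw [contract_indep_iff hE he]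
      rintro ⟨-, hind⟩
      rw [Set.insert_comm, Set.insert_diff_singleton, Set.insert_eq_self.2 heJ'] at hind
      exact hzJ (hJ.mem_of_insert_indep (Set.mem_insert_of_mem _ hz.1) hind)
    · rw [contract_ground_eq, hE]
      refine Set.insert_subset ⟨Set.mem_univ _, hze⟩ fun y hy => ⟨Set.mem_univ _, hy.2⟩
  rw [basis_eRk_eq hNb, basis_eRk_eq hJ, Set.encard_diff_singleton_add_one heJ']

end ContractLemmas

section Abstract

variable {α : Type*} {M : Matroid α} {D : Set α} {e : α}

lemma dep_insert_diff_singleton (hE : M.E = Set.univ) {C : Set α} (hC : M.Dep C) :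
    M.Dep (insert e (C \ {e})) := by
  by_cases heC : e ∈ C
  · rwa [Set.insert_diff_singleton, Set.insert_eq_self.2 heC]
  · rw [Set.diff_singleton_eq_self heC]
    exact hC.superset (Set.subset_insert _ _) (hE ▸ Set.subset_univ _)

lemma main_abstract (hE : M.E = Set.univ) (he : M.Indep {e}) (heD : e ∈ D)
    (hD : DoubleCircuit M D) (hstar : ¬ Circuit M (D \ {e})) :
    DoubleCircuit (contract M {e}) (D \ {e}) ∧
      {C : Set α | Circuit (contract M {e}) C ∧ C ⊆ D \ {e}}.encard =
        {C : Set α | Circuit M C ∧ C ⊆ D}.encard := by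
  obtain ⟨hDE, hDfin, hDrk, hDall⟩ := hD
  have htop : eRk M D ≠ ⊤ := eRk_ne_top hDfin
  set N := contract M {e} with hN
  have hdepN : ∀ X, X ⊆ Set.univ \ {e} → (N.Dep X ↔ M.Dep (insert e X)) := by
    intro X hX
    have heX : e ∉ X := fun h => (hX h).2 rfl
    constructor
    · rintro ⟨hni, -⟩
      refine ⟨fun h => hni ?_, hE ▸ Set.subset_univ _⟩
      rw [hN, contract_indep_iff hE he]
      exact ⟨heX, h⟩
    · rintro ⟨hni, -⟩
      refine ⟨fun h => hni ?_, ?_⟩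
      · rw [hN, contract_indep_iff hE he] at h
        exact h.2
      · rw [hN, contract_ground_eq, hE]
        exact hX
  have hDe_sub : D \ {e} ⊆ Set.univ \ {e} :=
    Set.diff_subset_diff_left (Set.subset_univ _)
  -- rank facts
  have hC1 : eRk N (D \ {e}) + 1 = eRk M D := by
    rw [hN, contract_eRk_add_one hE he (fun h : e ∈ D \ {e} => h.2 rfl)]
    rw [Set.insert_diff_singleton, Set.insert_eq_self.2 heD]
  have rank1 : eRk N (D \ {e}) + 2 = (D \ {e}).encard := by
    have h2 : (D \ {e}).encard + 1 = D.encard := Set.encard_diff_singleton_add_one heD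
    have h3 : eRk N (D \ {e}) + 2 + 1 = (D \ {e}).encard + 1 := by
      rw [h2, ← hDrk, ← hC1]; ring
    exact WithTop.add_right_cancel ENat.one_ne_top h3
  have rank2 : ∀ d ∈ D \ {e}, eRk N ((D \ {e}) \ {d}) = eRk N (D \ {e}) := by
    rintro d ⟨hdD, hde⟩
    have hins : insert e ((D \ {e}) \ {d}) = D \ {d} := by
      ext z
      simp only [Set.mem_insert_iff, Set.mem_diff, Set.mem_singleton_iff]
      constructor
      · rintro (rfl | ⟨⟨hz, -⟩, hzd⟩)
        · exact ⟨heD, fun h => hde h.symm⟩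
        · exact ⟨hz, hzd⟩
      · rintro ⟨hz, hzd⟩
        by_cases hze : z = e
        · exact Or.inl hze
        · exact Or.inr ⟨⟨hz, hze⟩, hzd⟩
    have hL : eRk N ((D \ {e}) \ {d}) + 1 = eRk M (D \ {d}) := by
      rw [hN, contract_eRk_add_one hE he (fun h : e ∈ (D \ {e}) \ {d} => h.1.2 rfl), hins]
    rw [hDall d hdD, ← hC1] at hL
    exact WithTop.add_right_cancel ENat.one_ne_top hL
  have hDC : DoubleCircuit N (D \ {e}) := by
    refine ⟨?_, hDfin.subset Set.diff_subset, rank1, rank2⟩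
    rw [hN, contract_ground_eq, hE]
    exact hDe_sub
  -- the circuit bijection
  have dirA : ∀ C, Circuit M C → C ⊆ D → Circuit N (C \ {e}) := by
    intro C hC hCD
    have hCe : C \ {e} ⊆ Set.univ \ {e} := fun z hz => ⟨Set.mem_univ _, hz.2⟩
    constructor
    · rw [hdepN _ hCe]
      exact dep_insert_diff_singleton hE hC.1
    · intro S hS hSdep
      have hSsub : S ⊆ Set.univ \ {e} := hS.subset.trans hCe
      have heS : e ∉ S := fun h => (hSsub h).2 rfl
      rw [hdepN _ hSsub] at hSdep
      by_cases heC : e ∈ C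
      · obtain ⟨x, hx1, hx2⟩ := Set.exists_of_ssubset hS
        have hsub2 : insert e S ⊆ C :=
          Set.insert_subset heC (hS.subset.trans Set.diff_subset)
        have hss : insert e S ⊂ C := by
          refine Set.ssubset_iff_subset_ne.2 ⟨hsub2, fun hEq => ?_⟩
          have hx' : x ∈ insert e S := hEq ▸ hx1.1
          rcases hx' with rfl | hx'
          · exact hx1.2 rfl
          · exact hx2 hx'
        exact hC.2 _ hss hSdep
      · rw [Set.diff_singleton_eq_self heC] at hS
        obtain ⟨C'', hC''sub, hC''⟩ := exists_circuit_subset hSdep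
          (hDfin.subset (Set.insert_subset heD (hS.subset.trans hCD)))
        by_cases heC'' : e ∈ C''
        · exfalso
          have hXD : insert e C ⊆ D := Set.insert_subset heD hCD
          by_cases hXeq : insert e C = D
          · apply hstar
            have hCeq : C = D \ {e} := by
              rw [← hXeq, Set.insert_diff_self_of_notMem heC]
            rwa [← hCeq]
          · obtain ⟨d, hdD, hdX⟩ :=
              Set.exists_of_ssubset (Set.ssubset_iff_subset_ne.2 ⟨hXD, hXeq⟩)
            have hr1 : eRk M (insert e C \ {e}) = eRk M (insert e C) :=
              eRk_diff_singleton_of_circuit hC'' heC''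
                (hC''sub.trans (Set.insert_subset_insert hS.subset))
                (hE ▸ Set.subset_univ _)
            have hXe : insert e C \ {e} = C := Set.insert_diff_self_of_notMem heC
            have hr2 : eRk M (insert e C) + 2 ≤ (insert e C).encard := by
              have hle := dep_eRk_add_one_le hC.1 (hDfin.subset hCD)
              have hXc : (insert e C).encard = C.encard + 1 := by
                rw [Set.encard_insert_of_notMem heC]
              calc eRk M (insert e C) + 2 = (eRk M C + 1) + 1 := by
                    rw [← hr1, hXe]; ring
                _ ≤ C.encard + 1 := add_le_add_left hle 1
                _ = (insert e C).encard := hXc.symm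
            have hXsub : insert e C ⊆ D \ {d} := Set.subset_diff_singleton hXD hdX
            have hr3 : eRk M (D \ {d}) ≤ eRk M (insert e C) + ((D \ {d}) \ insert e C).encard :=
              eRk_le_eRk_add_encard_diff hXsub (hE ▸ Set.subset_univ _)
            have hr4 : ((D \ {d}) \ insert e C).encard + (insert e C).encard = (D \ {d}).encard :=
              Set.encard_diff_add_encard_of_subset hXsub
            have hr5 : (D \ {d}).encard = eRk M D + 1 := by
              have h5 : (D \ {d}).encard + 1 = (eRk M D + 1) + 1 := by
                rw [Set.encard_diff_singleton_add_one hdD, ← hDrk]; ring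
              exact WithTop.add_right_cancel ENat.one_ne_top h5
            have hfinal : eRk M D + 2 ≤ eRk M D + 1 := by
              calc eRk M D + 2 = eRk M (D \ {d}) + 2 := by rw [hDall d hdD]
                _ ≤ (eRk M (insert e C) + ((D \ {d}) \ insert e C).encard) + 2 :=
                    add_le_add_left hr3 2
                _ = (eRk M (insert e C) + 2) + ((D \ {d}) \ insert e C).encard := by ring
                _ ≤ (insert e C).encard + ((D \ {d}) \ insert e C).encard :=
                    add_le_add_left hr2 _
                _ = (D \ {d}).encard := by rw [add_comm]; exact hr4
                _ = eRk M D + 1 := hr5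
            have h21 : (2 : ℕ∞) ≤ 1 := (WithTop.add_le_add_iff_left htop).1 hfinal
            norm_num at h21
        · have hC''S : C'' ⊆ S := fun z hz =>
            ((hC''sub hz).resolve_left (fun h => heC'' (h ▸ hz)))
          exact hC.2 C'' (ssubset_of_subset_of_ssubset hC''S hS) hC''.1
  have dirB : ∀ C', Circuit N C' → C' ⊆ D \ {e} → ∃ C, (Circuit M C ∧ C ⊆ D) ∧ C \ {e} = C' := by
    intro C' hC' hC'D
    have hsub : C' ⊆ Set.univ \ {e} := hC'D.trans hDe_sub
    have hdep : M.Dep (insert e C') := (hdepN _ hsub).1 hC'.1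
    obtain ⟨C, hCsub, hC⟩ := exists_circuit_subset hdep
      (hDfin.subset (Set.insert_subset heD (hC'D.trans Set.diff_subset)))
    have hCD : C ⊆ D := hCsub.trans (Set.insert_subset heD (hC'D.trans Set.diff_subset))
    have hkey : C \ {e} = C' := by
      have hsub2 : C \ {e} ⊆ C' := fun z hz => ((hCsub hz.1).resolve_left hz.2)
      by_contra hne
      apply hC'.2 (C \ {e}) (Set.ssubset_iff_subset_ne.2 ⟨hsub2, hne⟩)
      rw [hdepN _ (fun z hz => ⟨Set.mem_univ _, hz.2⟩)]
      exact dep_insert_diff_singleton hE hC.1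
    exact ⟨C, ⟨hC, hCD⟩, hkey⟩
  have hinj : Set.InjOn (fun C => C \ {e}) {C : Set α | Circuit M C ∧ C ⊆ D} := by
    intro C₁ h₁ C₂ h₂ hEq
    simp only at hEq
    by_cases he₁ : e ∈ C₁ <;> by_cases he₂ : e ∈ C₂
    · calc C₁ = insert e (C₁ \ {e}) := by
            rw [Set.insert_diff_singleton, Set.insert_eq_self.2 he₁]
        _ = insert e (C₂ \ {e}) := by rw [hEq]
        _ = C₂ := by rw [Set.insert_diff_singleton, Set.insert_eq_self.2 he₂]
    · exfalso
      have hss : C₂ ⊂ C₁ := by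
        rw [← Set.diff_singleton_eq_self he₂, ← hEq]
        exact Set.sdiff_singleton_ssubset.2 he₁
      exact h₁.1.2 _ hss h₂.1.1
    · exfalso
      have hss : C₁ ⊂ C₂ := by
        rw [← Set.diff_singleton_eq_self he₁, hEq]
        exact Set.sdiff_singleton_ssubset.2 he₂
      exact h₂.1.2 _ hss h₁.1.1
    · rw [← Set.diff_singleton_eq_self he₁, ← Set.diff_singleton_eq_self he₂, hEq]
  have himg : {C : Set α | Circuit N C ∧ C ⊆ D \ {e}} =
      (fun C => C \ {e}) '' {C : Set α | Circuit M C ∧ C ⊆ D} := by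
    ext C'
    constructor
    · rintro ⟨h1, h2⟩
      obtain ⟨C, hC, hCe⟩ := dirB C' h1 h2
      exact ⟨C, hC, hCe⟩
    · rintro ⟨C, ⟨hC, hCD⟩, rfl⟩
      exact ⟨dirA C hC hCD, Set.diff_subset_diff_left hCD⟩
  exact ⟨hDC, by rw [himg, hinj.encard_image]⟩

end Abstract

/-- Suppose every component of `G[D]` contains a cycle, `D` is a double
circuit of `B(G)` of rank at least `1`, and `e ∈ D` is a subdivided edge (it has an endpoint
of degree `2` in `G[D]`). Then `D \ {e}` is a double circuit of `B(G) / e` of the same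
degree as `D`. -/
theorem contract_subdivided_edge {V E : Type*} (G : Multigraph V E) (M : Matroid E)
    (hM : Multigraph.IsBicircularOf G M) (D : Set E) (hD : DoubleCircuit M D)
    (hcyc : ∀ v ∈ G.verts D, ∃ C : Set E, G.IsCycleIn D C ∧
      ∃ w ∈ G.verts C, G.Reachable D v w)
    (e : E) (he : e ∈ D) (hsub : ∃ v ∈ G.inc e, G.degree D v = 2)
    (hr : 1 ≤ eRk M D) :
    DoubleCircuit (contract M {e}) (D \ {e}) ∧
      {C : Set E | Circuit (contract M {e}) C ∧ C ⊆ D \ {e}}.encard =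
        {C : Set E | Circuit M C ∧ C ⊆ D}.encard := by
  obtain ⟨hME, hIff⟩ := hM
  obtain ⟨v, hv_inc, hdeg⟩ := hsub
  -- `{e}` is independent in the bicircular matroid
  have he_indep : M.Indep {e} := by
    rw [hIff]
    intro C₁ C₂ h₁ h₂ _
    have hset : ∀ C : Set E, G.IsCycleIn {e} C → C = {e} := by
      rintro C ⟨x, es, vs, hcy, rfl⟩
      obtain ⟨⟨hw, -⟩, hne, -, -⟩ := hcy
      ext f
      simp only [Set.mem_setOf_eq, Set.mem_singleton_iff]
      constructor
      · intro hf
        exact hw.edges_mem f hf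
      · intro hfe
        cases es with
        | nil => exact absurd rfl hne
        | cons f₀ tl =>
          have hf₀ : f₀ ∈ ({e} : Set E) := hw.edges_mem f₀ (List.mem_cons_self)
          rw [Set.mem_singleton_iff] at hf₀
          rw [hfe, ← hf₀]
          exact List.mem_cons_self
    rw [hset C₁ h₁, hset C₂ h₂]
  have hdeg' : {f ∈ D | v ∈ G.inc f}.ncard + {f ∈ D | G.inc f = s(v, v)}.ncard = 2 := hdeg
  have hAfin : {f ∈ D | v ∈ G.inc f}.Finite := hD.2.1.subset (Set.sep_subset _ _)
  have hBfin : {f ∈ D | G.inc f = s(v, v)}.Finite := hD.2.1.subset (Set.sep_subset _ _)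
  have heA : e ∈ {f ∈ D | v ∈ G.inc f} := ⟨he, hv_inc⟩
  by_cases hloop : G.inc e = s(v, v)
  · -- the loop case contradicts the double circuit hypothesis
    exfalso
    have heB : e ∈ {f ∈ D | G.inc f = s(v, v)} := ⟨he, hloop⟩
    have hA1 : {f ∈ D | v ∈ G.inc f}.ncard = 1 := by
      have h1 : 0 < {f ∈ D | v ∈ G.inc f}.ncard := (Set.ncard_pos hAfin).2 ⟨e, heA⟩
      have h2 : 0 < {f ∈ D | G.inc f = s(v, v)}.ncard := (Set.ncard_pos hBfin).2 ⟨e, heB⟩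
      omega
    have honly_D : ∀ f ∈ D, v ∈ G.inc f → f = e := by
      intro f hf hvf
      obtain ⟨a, ha⟩ := Set.ncard_eq_one.1 hA1
      have hfA : f ∈ ({a} : Set E) := ha ▸ (⟨hf, hvf⟩ : f ∈ {f ∈ D | v ∈ G.inc f})
      have heA' : e ∈ ({a} : Set E) := ha ▸ heA
      rw [Set.mem_singleton_iff] at hfA heA'
      rw [hfA, ← heA']
    obtain ⟨I₀, hI₀⟩ := M.exists_isBasis (D \ {e}) (hME ▸ Set.subset_univ _)
    have hI₀D : I₀ ⊆ D \ {e} := hI₀.subset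
    have hI₀bic : G.BicircIndep I₀ := (hIff I₀).1 hI₀.indep
    have honly' : ∀ f ∈ insert e I₀, v ∈ G.inc f → f = e := by
      intro f hf hvf
      rcases Set.mem_insert_iff.1 hf with rfl | hf'
      · rfl
      · exact honly_D f (hI₀D hf').1 hvf
    have hst : ∀ f ∈ insert e I₀, v ∈ G.inc f → G.inc f = s(v, v) := by
      intro f hf hvf
      rw [honly' f hf hvf]
      exact hloop
    have hvI₀ : ∀ f ∈ I₀, v ∉ G.inc f := by
      intro f hf hvf
      exact (hI₀D hf).2 (honly_D f (hI₀D hf).1 hvf)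
    have hIns : M.Indep (insert e I₀) := by
      rw [hIff]
      rintro C₁ C₂ h₁ h₂ ⟨u, w, hu, hw, hreach⟩
      have hclass : ∀ C : Set E, G.IsCycleIn (insert e I₀) C →
          C = {e} ∨ (G.IsCycleIn I₀ C ∧ v ∉ G.verts C) := by
        rintro C ⟨x, es, vs, hcy, rfl⟩
        by_cases he_es : e ∈ es
        · left
          have hes : es = [e] := hcy.loop_eq honly' hloop he_es
          rw [hes]
          ext f
          simp
        · right
          have hedges : ∀ f ∈ es, f ∈ I₀ := fun f hf =>
            (Set.mem_insert_iff.1 (hcy.1.1.edges_mem f hf)).resolve_left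
              (fun h => he_es (h ▸ hf))
          refine ⟨⟨x, es, vs, ⟨⟨hcy.1.1.mono hedges, hcy.1.2⟩, hcy.2.1, hcy.2.2.1, hcy.2.2.2⟩,
            rfl⟩, ?_⟩
          rintro ⟨f, hf, hvf⟩
          exact hvI₀ f (hedges f hf) hvf
      have hvert_e : ∀ z, z ∈ G.verts {e} → z = v := by
        rintro z ⟨f, hf, hzf⟩
        rw [Set.mem_singleton_iff] at hf
        subst hf
        rw [hloop, Sym2.mem_iff] at hzf
        tauto
      have hvert_I : ∀ C : Set E, G.IsCycleIn I₀ C → ∀ z ∈ G.verts C, z ≠ v := by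
        rintro C hC z ⟨f, hf, hzf⟩ rfl
        obtain ⟨x, es, vs, hcy, rfl⟩ := hC
        exact hvI₀ f (hcy.1.1.edges_mem f hf) hzf
      rcases hclass C₁ h₁ with rfl | ⟨hc₁, hv₁⟩ <;> rcases hclass C₂ h₂ with rfl | ⟨hc₂, hv₂⟩
      · rfl
      · exfalso
        have hu_v : u = v := hvert_e u hu
        subst hu_v
        obtain ⟨es, vs, hwalk, hlast⟩ := hreach
        rw [Multigraph.getLast_cons_eq_getLastD] at hlast
        have hstay := hwalk.stay hst rfl
        have hw_v : w = u := by
          rw [← hlast]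
          rcases List.mem_cons.1 (List.getLastD_mem_cons (l := vs) (a := u)) with h | h
          · exact h
          · exact hstay _ h
        exact hv₂ (hw_v ▸ hw)
      · exfalso
        have hw_v : w = v := hvert_e w hw
        have hu_ne : u ≠ v := fun h => hv₁ (h ▸ hu)
        obtain ⟨es, vs, hwalk, hlast⟩ := hreach
        rw [Multigraph.getLast_cons_eq_getLastD] at hlast
        obtain ⟨hvs, -⟩ := hwalk.avoid honly' hloop hu_ne
        have hne_v : vs.getLastD u ≠ v := by
          rcases List.mem_cons.1 (List.getLastD_mem_cons (l := vs) (a := u)) with h | h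
          · rw [← h] at hu_ne
            exact fun hc => hu_ne (h ▸ hc)
          · exact hvs _ h
        exact hne_v (hlast.trans hw_v)
      · refine hI₀bic C₁ C₂ hc₁ hc₂ ⟨u, w, hu, hw, ?_⟩
        have hu_ne : u ≠ v := fun h => hv₁ (h ▸ hu)
        obtain ⟨es, vs, hwalk, hlast⟩ := hreach
        obtain ⟨-, hes⟩ := hwalk.avoid honly' hloop hu_ne
        have hedges : ∀ f ∈ es, f ∈ I₀ := fun f hf =>
          (Set.mem_insert_iff.1 (hwalk.edges_mem f hf)).resolve_left (hes f hf)
        exact ⟨es, vs, hwalk.mono hedges, hlast⟩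
    -- the independent set `insert e I₀` is too large
    have hle : (insert e I₀).encard ≤ eRk M D :=
      encard_le_eRk hIns (Set.insert_subset he (hI₀D.trans Set.diff_subset))
    have hIcard : I₀.encard = eRk M D := by
      rw [← basis_eRk_eq hI₀]
      exact hD.2.2.2 e he
    rw [Set.encard_insert_of_notMem (fun h => (hI₀D h).2 rfl), hIcard] at hle
    exact lt_irrefl _ ((ENat.add_one_le_iff (eRk_ne_top hD.2.1)).1 hle)
  · -- non-loop case: `D \ {e}` is not a circuit, then apply the abstract result
    have heB : e ∉ {f ∈ D | G.inc f = s(v, v)} := fun h => hloop h.2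
    have hBempty : {f ∈ D | G.inc f = s(v, v)} = ∅ := by
      by_contra hne
      obtain ⟨f₀, hf₀⟩ := Set.nonempty_iff_ne_empty.2 hne
      have hf₀A : f₀ ∈ {f ∈ D | v ∈ G.inc f} :=
        ⟨hf₀.1, by rw [hf₀.2]; exact Sym2.mem_mk_left _ _⟩
      have hef₀ : e ≠ f₀ := fun h => heB (h ▸ hf₀)
      have h2 : 2 ≤ {f ∈ D | v ∈ G.inc f}.ncard := by
        have hp : ({e, f₀} : Set E) ⊆ {f ∈ D | v ∈ G.inc f} :=
          Set.insert_subset heA (Set.singleton_subset_iff.2 hf₀A)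
        have := Set.ncard_le_ncard hp hAfin
        rwa [Set.ncard_pair hef₀] at this
      have h1 : 0 < {f ∈ D | G.inc f = s(v, v)}.ncard := (Set.ncard_pos hBfin).2 ⟨f₀, hf₀⟩
      omega
    have hA2 : {f ∈ D | v ∈ G.inc f}.ncard = 2 := by
      have hB0 : {f ∈ D | G.inc f = s(v, v)}.ncard = 0 := by rw [hBempty]; simp
      omega
    obtain ⟨a, b, hab, hAeq⟩ := Set.ncard_eq_two.1 hA2
    have heA' : e ∈ ({a, b} : Set E) := hAeq ▸ heA
    have hg : ∃ g, g ≠ e ∧ g ∈ {f ∈ D | v ∈ G.inc f} ∧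
        ({f ∈ D | v ∈ G.inc f} : Set E) = {e, g} := by
      rcases heA' with rfl | rfl
      · exact ⟨b, fun h => hab h.symm, hAeq ▸ (by right; rfl), hAeq⟩
      · refine ⟨a, fun h => hab h, hAeq ▸ (by left; rfl), ?_⟩
        rw [hAeq, Set.pair_comm]
    obtain ⟨g, hge, hgA, hAg⟩ := hg
    have honly_g : ∀ f ∈ D \ ({e} : Set E), v ∈ G.inc f → f = g := by
      intro f hf hvf
      have hfA : f ∈ ({e, g} : Set E) := hAg ▸ (⟨hf.1, hvf⟩ : f ∈ {f ∈ D | v ∈ G.inc f})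
      rcases hfA with rfl | rfl
      · exact absurd rfl hf.2
      · rfl
    have hgl : G.inc g ≠ s(v, v) := by
      intro h
      have : g ∈ {f ∈ D | G.inc f = s(v, v)} := ⟨hgA.1, h⟩
      rw [hBempty] at this
      exact this
    have hgD : g ∈ D \ ({e} : Set E) := ⟨hgA.1, hge⟩
    have hstar : ¬ Circuit M (D \ {e}) := by
      rintro ⟨hdep, hmin⟩
      apply hmin ((D \ {e}) \ {g}) (Set.sdiff_singleton_ssubset.2 hgD)
      refine ⟨?_, hME ▸ Set.subset_univ _⟩
      intro hind
      have hbic : G.BicircIndep ((D \ {e}) \ {g}) := (hIff _).1 hind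
      have hnbic : ¬ G.BicircIndep (D \ {e}) := fun h => hdep.1 ((hIff _).2 h)
      apply hnbic
      rintro C₁ C₂ h₁ h₂ ⟨u, w, hu, hw, hreach⟩
      have htrans : ∀ C, G.IsCycleIn (D \ {e}) C →
          G.IsCycleIn ((D \ {e}) \ {g}) C ∧ v ∉ G.verts C := by
        rintro C ⟨x, es, vs, hcy, rfl⟩
        have havoid : v ∉ x :: vs := hcy.avoid_vertex honly_g hgl
        have hedges : ∀ f ∈ es, f ∈ (D \ {e}) \ ({g} : Set E) := by
          intro f hf
          refine ⟨hcy.1.1.edges_mem f hf, ?_⟩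
          rintro rfl
          exact havoid (hcy.1.1.vertex_mem hf hgA.2)
        refine ⟨⟨x, es, vs, ⟨⟨hcy.1.1.mono hedges, hcy.1.2⟩, hcy.2.1, hcy.2.2.1, hcy.2.2.2⟩,
          rfl⟩, ?_⟩
        rintro ⟨f, hf, hvf⟩
        exact havoid (hcy.1.1.vertex_mem hf hvf)
      obtain ⟨h₁', hv₁⟩ := htrans C₁ h₁
      obtain ⟨h₂', hv₂⟩ := htrans C₂ h₂
      refine hbic C₁ C₂ h₁' h₂' ⟨u, w, hu, hw, ?_⟩
      obtain ⟨es, vs, hwalk, hlast⟩ := hreach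
      rw [Multigraph.getLast_cons_eq_getLastD] at hlast
      obtain ⟨es', vs', hpw, hnd, hlast'⟩ := hwalk.to_path
      have hu_ne : u ≠ v := fun h => hv₁ (h ▸ hu)
      have hw_ne : w ≠ v := fun h => hv₂ (h ▸ hw)
      have hvnot : v ∉ u :: vs' := by
        intro hvm
        rcases List.mem_cons.1 hvm with h | h
        · exact hu_ne h.symm
        · by_cases hlastv : v = vs'.getLastD u
          · exact hw_ne (hlastv.trans (hlast'.trans hlast)).symm
          · obtain ⟨f₁, hf₁, f₂, hf₂, hne12, hv1, hv2⟩ := hpw.interior' hnd h hlastv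
            have e₁ : f₁ = g := honly_g f₁ (hpw.edges_mem f₁ hf₁) hv1
            have e₂ : f₂ = g := honly_g f₂ (hpw.edges_mem f₂ hf₂) hv2
            exact hne12 (e₁.trans e₂.symm)
      have hedges' : ∀ f ∈ es', f ∈ (D \ {e}) \ ({g} : Set E) := by
        intro f hf
        refine ⟨hpw.edges_mem f hf, ?_⟩
        rintro rfl
        exact hvnot (hpw.vertex_mem hf hgA.2)
      exact ⟨es', vs', hpw.mono hedges',
        by rw [Multigraph.getLast_cons_eq_getLastD, hlast', hlast]⟩
    exact main_abstract hME he_indep he hD hstar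

end Paper
end
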